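/- arXiv:1408.4866 — 6 statements merged into one kernel-verified Lean document; each statement's English description precedes it below -/
import Mathlib

section
/- The number of r-regular partitions of n (partitions in which each part has multiplicity less than r) equals the number of r-class regular partitions of n (partitions with no part divisible by r), for any integer r ≥ 2. -/
open Nat Finset
open scoped Classical

namespace GlaisherAux

/-- The Glaisher map on multisets: replace each part `a = b * r ^ k` (with `r ∤ b`)
by `r ^ k` copies of `b`. -/
def glMap (r : ℕ) (s : Multiset ℕ) : Multiset ℕ :=
  s.bind fun a => Multiset.replicate (r ^ r.maxPowDiv a) (a / r ^ r.maxPowDiv a)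

lemma maxPowDiv_eq_zero {r b : ℕ} (hb : ¬ r ∣ b) : r.maxPowDiv b = 0 := by
  by_contra h
  exact hb (dvd_trans (dvd_pow_self r h) (Nat.maxPowDiv.pow_dvd (p := r) (n := b)))

lemma pow_maxPowDiv_mul_div (r a : ℕ) : r ^ r.maxPowDiv a * (a / r ^ r.maxPowDiv a) = a :=
  Nat.mul_div_cancel' (Nat.maxPowDiv.pow_dvd (p := r) (n := a))

lemma maxPowDiv_mul_pow {r b : ℕ} (hr : 1 < r) (hb : ¬ r ∣ b) (k : ℕ) :
    r.maxPowDiv (b * r ^ k) = k := by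
  have hb0 : 0 < b := Nat.pos_of_ne_zero (by rintro rfl; exact hb (dvd_zero r))
  have h0 : padicValNat r b = 0 := maxPowDiv_eq_zero hb
  show padicValNat r (b * r ^ k) = k
  rw [mul_comm, Nat.maxPowDiv.base_pow_mul hr hb0.ne', h0]
  omega

lemma div_pow_maxPowDiv {r b : ℕ} (hr : 1 < r) (hb : ¬ r ∣ b) (k : ℕ) :
    (b * r ^ k) / r ^ r.maxPowDiv (b * r ^ k) = b := by
  rw [maxPowDiv_mul_pow hr hb k, Nat.mul_div_cancel _ (pow_pos (by omega) k)]

lemma not_dvd_div_pow_maxPowDiv {r a : ℕ} (hr : 1 < r) (ha : 0 < a) :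
    ¬ r ∣ a / r ^ r.maxPowDiv a := by
  intro ⟨c, hc⟩
  have h1 : r ^ (r.maxPowDiv a + 1) ∣ a := by
    refine ⟨c, ?_⟩
    calc a = r ^ r.maxPowDiv a * (a / r ^ r.maxPowDiv a) := (pow_maxPowDiv_mul_div r a).symm
    _ = r ^ r.maxPowDiv a * (r * c) := by rw [hc]
    _ = r ^ (r.maxPowDiv a + 1) * c := by ring
  have : r.maxPowDiv a + 1 ≤ r.maxPowDiv a := (Nat.pow_dvd_iff_le_padicValNat hr.ne' ha.ne').mp h1
  omega

lemma digits_sum {r : ℕ} (hr : 1 < r) :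
    ∀ N m, m < r ^ N → ∑ k ∈ Finset.range N, r ^ k * (m / r ^ k % r) = m
  | 0, m, h => by
    simp only [pow_zero, Nat.lt_one_iff] at h
    simp [h]
  | N + 1, m, h => by
    have hr0 : 0 < r := by omega
    have hm : m / r < r ^ N := by
      rw [Nat.div_lt_iff_lt_mul hr0, ← pow_succ]
      exact h
    have ih := digits_sum hr N (m / r) hm
    rw [Finset.sum_range_succ']
    have h1 : ∀ k, r ^ (k + 1) * (m / r ^ (k + 1) % r) = r * (r ^ k * (m / r / r ^ k % r)) := by
      intro k
      rw [Nat.div_div_eq_div_mul, ← _root_.pow_succ']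
      ring
    simp only [h1, ← Finset.mul_sum, ih, pow_zero, Nat.div_one, one_mul]
    exact Nat.div_add_mod m r

lemma digit_of_sum {r : ℕ} (hr : 1 < r) :
    ∀ (N : ℕ) (f : ℕ → ℕ), (∀ k, f k < r) → ∀ j < N,
      (∑ k ∈ Finset.range N, r ^ k * f k) / r ^ j % r = f j
  | 0, f, hf, j, hj => absurd hj (Nat.not_lt_zero j)
  | N + 1, f, hf, j, hj => by
    have hr0 : 0 < r := by omega
    have hS : (∑ k ∈ Finset.range (N + 1), r ^ k * f k)
        = r * (∑ k ∈ Finset.range N, r ^ k * f (k + 1)) + f 0 := by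
      rw [Finset.sum_range_succ', Finset.mul_sum]
      simp only [pow_zero, one_mul]
      congr 1
      refine Finset.sum_congr rfl fun k _ => by ring
    rw [hS]
    cases j with
    | zero =>
      simp only [pow_zero, Nat.div_one]
      rw [Nat.mul_add_mod]
      exact Nat.mod_eq_of_lt (hf 0)
    | succ j =>
      have h2 : (r * (∑ k ∈ Finset.range N, r ^ k * f (k + 1)) + f 0) / r ^ (j + 1)
          = (∑ k ∈ Finset.range N, r ^ k * f (k + 1)) / r ^ j := by
        rw [_root_.pow_succ', ← Nat.div_div_eq_div_mul, Nat.mul_add_div hr0,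
          Nat.div_eq_of_lt (hf 0), add_zero]
      rw [h2]
      exact digit_of_sum hr N (fun k => f (k + 1)) (fun k => hf (k + 1)) j (by omega)

lemma glMap_sum (r : ℕ) (s : Multiset ℕ) : (glMap r s).sum = s.sum := by
  rw [glMap, Multiset.sum_bind]
  have h1 : ∀ a ∈ s, (Multiset.replicate (r ^ r.maxPowDiv a) (a / r ^ r.maxPowDiv a)).sum
      = id a := by
    intro a _
    rw [Multiset.sum_replicate, smul_eq_mul, pow_maxPowDiv_mul_div, id]
  rw [Multiset.map_congr rfl h1, Multiset.map_id]

lemma mem_glMap {r : ℕ} (hr : 1 < r) {s : Multiset ℕ} (hs : ∀ a ∈ s, 0 < a) {b : ℕ}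
    (hb : b ∈ glMap r s) : 0 < b ∧ ¬ r ∣ b := by
  rw [glMap, Multiset.mem_bind] at hb
  obtain ⟨a, ha, hba⟩ := hb
  have := Multiset.eq_of_mem_replicate hba
  subst this
  have ha0 := hs a ha
  constructor
  · exact Nat.div_pos (Nat.le_of_dvd ha0 (Nat.maxPowDiv.pow_dvd (p := r) (n := a))) (pow_pos (by omega) _)
  · exact not_dvd_div_pow_maxPowDiv hr ha0

lemma count_glMap {r : ℕ} (hr : 1 < r) (n : ℕ) {b : ℕ} (hb : ¬ r ∣ b)
    {s : Multiset ℕ} (hs : ∀ a ∈ s, 0 < a ∧ a ≤ n) :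
    (glMap r s).count b = ∑ k ∈ Finset.range (n + 1), r ^ k * s.count (b * r ^ k) := by
  have hb0 : 0 < b := Nat.pos_of_ne_zero (by rintro rfl; exact hb (dvd_zero r))
  induction s using Multiset.induction_on with
  | empty => simp [glMap]
  | cons a t ih =>
    have ha := hs a (Multiset.mem_cons_self a t)
    have ht : ∀ x ∈ t, 0 < x ∧ x ≤ n := fun x hx => hs x (Multiset.mem_cons_of_mem hx)
    have hrep : (Multiset.replicate (r ^ r.maxPowDiv a) (a / r ^ r.maxPowDiv a)).count b
        = ∑ k ∈ Finset.range (n + 1), r ^ k * (if b * r ^ k = a then 1 else 0) := by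
      rw [Multiset.count_replicate]
      by_cases hcore : a / r ^ r.maxPowDiv a = b
      · rw [if_pos hcore]
        have hak : a = b * r ^ r.maxPowDiv a := by
          rw [← hcore, mul_comm, pow_maxPowDiv_mul_div]
        have hk_le : r.maxPowDiv a ≤ n := by
          have hb1 : 1 ≤ b := hb0
          have h1 : r ^ r.maxPowDiv a ≤ a := by
            calc r ^ r.maxPowDiv a = 1 * r ^ r.maxPowDiv a := by ring
            _ ≤ b * r ^ r.maxPowDiv a := Nat.mul_le_mul_right _ hb1
            _ = a := hak.symm
          have h2 : r.maxPowDiv a < r ^ r.maxPowDiv a := Nat.lt_pow_self hr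
          omega
        rw [Finset.sum_eq_single_of_mem (r.maxPowDiv a) (Finset.mem_range.mpr (by omega))]
        · rw [if_pos hak.symm, mul_one]
        · intro k _ hk
          rw [if_neg, mul_zero]
          intro hcontra
          apply hk
          have h3 : b * r ^ k = b * r ^ r.maxPowDiv a := hcontra.trans hak
          have h4 : r ^ k = r ^ r.maxPowDiv a := Nat.eq_of_mul_eq_mul_left hb0 h3
          exact Nat.pow_right_injective hr h4
      · rw [if_neg hcore]
        refine (Finset.sum_eq_zero fun k _ => ?_).symm
        rw [if_neg, mul_zero]
        intro hcontra
        apply hcore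
        rw [← hcontra, div_pow_maxPowDiv hr hb]
    rw [glMap, Multiset.cons_bind, Multiset.count_add, ← glMap, ih ht, hrep]
    simp only [Multiset.count_cons, mul_add, Finset.sum_add_distrib]
    exact add_comm _ _

/-- Build a multiset from a count function, with parts bounded by `n`. -/
def fromCounts (c : ℕ → ℕ) (n : ℕ) : Multiset ℕ :=
  ∑ i ∈ Finset.range (n + 1), Multiset.replicate (c i) i

lemma count_fromCounts (c : ℕ → ℕ) (n j : ℕ) :
    (fromCounts c n).count j = if j ≤ n then c j else 0 := by
  rw [fromCounts, Multiset.count_sum']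
  simp only [Multiset.count_replicate]
  rw [Finset.sum_ite_eq' (Finset.range (n + 1)) j c]
  simp [Nat.lt_succ_iff]

lemma mem_fromCounts {c : ℕ → ℕ} {n i : ℕ} (h : i ∈ fromCounts c n) :
    c i ≠ 0 ∧ i ≤ n := by
  have := Multiset.count_pos.mpr h
  rw [count_fromCounts] at this
  by_cases hi : i ≤ n
  · rw [if_pos hi] at this; omega
  · rw [if_neg hi] at this; omega

lemma count_mul_le_sum (s : Multiset ℕ) (b : ℕ) : s.count b * b ≤ s.sum := by
  have h1 : Multiset.replicate (s.count b) b ≤ s := by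
    rw [Multiset.le_iff_count]
    intro a
    rw [Multiset.count_replicate]
    split
    · next h => subst h; rfl
    · exact Nat.zero_le _
  obtain ⟨u, hu⟩ := Multiset.le_iff_exists_add.mp h1
  have h2 : s.sum = s.count b * b + u.sum := by
    conv_lhs => rw [hu]
    rw [Multiset.sum_add, Multiset.sum_replicate, smul_eq_mul]
  omega

end GlaisherAux

open GlaisherAux

theorem regular_eq_class_regular (r n : ℕ) (hr : 2 ≤ r) :
    (Finset.univ.filter (fun l : n.Partition => ∀ i, l.parts.count i < r)).card =
    (Finset.univ.filter (fun l : n.Partition => ∀ p ∈ l.parts, ¬ r ∣ p)).card := by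
  have hr1 : 1 < r := hr
  -- facts about parts of a partition
  have hparts : ∀ l : n.Partition, ∀ a ∈ l.parts, 0 < a ∧ a ≤ n := by
    intro l a ha
    refine ⟨l.parts_pos ha, ?_⟩
    rw [← l.parts_sum]
    exact Multiset.single_le_sum (fun x _ => Nat.zero_le x) a ha
  -- the Glaisher map as a map on partitions
  have glPos : ∀ l : n.Partition, ∀ b ∈ glMap r l.parts, 0 < b := by
    intro l b hb
    exact (mem_glMap hr1 (fun a ha => (hparts l a ha).1) hb).1
  have glSum : ∀ l : n.Partition, (glMap r l.parts).sum = n := by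
    intro l; rw [glMap_sum, l.parts_sum]
  apply Finset.card_bij (fun (l : n.Partition) _ =>
    (⟨glMap r l.parts, fun hb => glPos l _ hb, glSum l⟩ : n.Partition))
  · -- maps into the class-regular partitions
    intro l hl
    simp only [Finset.mem_filter, Finset.mem_univ, true_and]
    intro p hp
    exact (mem_glMap hr1 (fun a ha => (hparts l a ha).1) hp).2
  · -- injective
    intro l₁ hl₁ l₂ hl₂ heq
    simp only [Finset.mem_filter, Finset.mem_univ, true_and] at hl₁ hl₂
    have heq' : glMap r l₁.parts = glMap r l₂.parts := congrArg Nat.Partition.parts heq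
    have key : ∀ i, l₁.parts.count i = l₂.parts.count i := by
      intro i
      rcases Nat.eq_zero_or_pos i with rfl | hi
      · rw [Multiset.count_eq_zero_of_notMem, Multiset.count_eq_zero_of_notMem]
        · intro h; exact absurd (l₂.parts_pos h) (lt_irrefl 0)
        · intro h; exact absurd (l₁.parts_pos h) (lt_irrefl 0)
      by_cases hin : i ≤ n
      · set b := i / r ^ r.maxPowDiv i with hbdef
        set k := r.maxPowDiv i with hkdef
        have hib : i = b * r ^ k := by rw [hbdef, hkdef, mul_comm, pow_maxPowDiv_mul_div]
        have hbnd : ¬ r ∣ b := not_dvd_div_pow_maxPowDiv hr1 hi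
        have hkn : k < n + 1 := by
          have h1 : r ^ k ≤ i := Nat.le_of_dvd hi (hkdef ▸ Nat.maxPowDiv.pow_dvd (p := r) (n := i))
          have h2 : k < r ^ k := Nat.lt_pow_self hr1
          omega
        have hc1 := count_glMap hr1 n hbnd (hparts l₁)
        have hc2 := count_glMap hr1 n hbnd (hparts l₂)
        have hsums : (∑ j ∈ Finset.range (n + 1), r ^ j * l₁.parts.count (b * r ^ j))
            = ∑ j ∈ Finset.range (n + 1), r ^ j * l₂.parts.count (b * r ^ j) := by
          rw [← hc1, ← hc2, heq']
        have d1 := digit_of_sum hr1 (n + 1) (fun j => l₁.parts.count (b * r ^ j))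
          (fun j => hl₁ _) k hkn
        have d2 := digit_of_sum hr1 (n + 1) (fun j => l₂.parts.count (b * r ^ j))
          (fun j => hl₂ _) k hkn
        rw [hib]
        calc l₁.parts.count (b * r ^ k)
            = (∑ j ∈ Finset.range (n + 1), r ^ j * l₁.parts.count (b * r ^ j)) / r ^ k % r :=
              d1.symm
          _ = (∑ j ∈ Finset.range (n + 1), r ^ j * l₂.parts.count (b * r ^ j)) / r ^ k % r := by
              rw [hsums]
          _ = l₂.parts.count (b * r ^ k) := d2
      · rw [Multiset.count_eq_zero_of_notMem, Multiset.count_eq_zero_of_notMem]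
        · intro h; exact hin (hparts l₂ i h).2
        · intro h; exact hin (hparts l₁ i h).2
    exact Nat.Partition.ext (Multiset.ext.mpr key)
  · -- surjective
    intro t ht
    simp only [Finset.mem_filter, Finset.mem_univ, true_and] at ht
    -- digit count function
    set c : ℕ → ℕ := fun i =>
      t.parts.count (i / r ^ r.maxPowDiv i) / r ^ r.maxPowDiv i % r with hc
    have hc0 : c 0 = 0 := by
      have h0 : t.parts.count 0 = 0 :=
        Multiset.count_eq_zero_of_notMem (fun h => absurd (t.parts_pos h) (lt_irrefl 0))
      simp [hc, h0]
    set s := fromCounts c n with hs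
    have hspos : ∀ a ∈ s, 0 < a := by
      intro a ha
      have := (mem_fromCounts ha).1
      rcases Nat.eq_zero_or_pos a with rfl | h
      · exact absurd hc0 this
      · exact h
    have hsbd : ∀ a ∈ s, 0 < a ∧ a ≤ n := fun a ha => ⟨hspos a ha, (mem_fromCounts ha).2⟩
    -- the key: glMap r s = t.parts
    have hkey : glMap r s = t.parts := by
      apply Multiset.ext.mpr
      intro b
      by_cases hb : r ∣ b
      · rw [Multiset.count_eq_zero_of_notMem, Multiset.count_eq_zero_of_notMem]
        · intro h; exact ht b h hb
        · intro h; exact (mem_glMap hr1 hspos h).2 hb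
      · have hb0 : 0 < b := Nat.pos_of_ne_zero (by rintro rfl; exact hb (dvd_zero r))
        rw [count_glMap hr1 n hb hsbd]
        set m := t.parts.count b with hm
        have hmb : m * b ≤ n := by rw [← t.parts_sum]; exact count_mul_le_sum t.parts b
        have hmn : m ≤ n := le_trans (Nat.le_mul_of_pos_right m hb0) hmb
        have hmN : m < r ^ (n + 1) := by
          calc m ≤ n := hmn
          _ < 2 ^ (n + 1) := lt_of_lt_of_le ((Nat.lt_two_pow_self (n := n))) (Nat.pow_le_pow_right (by omega) (by omega))
          _ ≤ r ^ (n + 1) := Nat.pow_le_pow_left hr _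
        have hterm : ∀ k ∈ Finset.range (n + 1),
            r ^ k * s.count (b * r ^ k) = r ^ k * (m / r ^ k % r) := by
          intro k _
          congr 1
          rw [hs, count_fromCounts]
          by_cases hkn : b * r ^ k ≤ n
          · rw [if_pos hkn, hc]
            simp only
            rw [div_pow_maxPowDiv hr1 hb, maxPowDiv_mul_pow hr1 hb]
          · rw [if_neg hkn]
            have hlt : m < r ^ k := by
              by_contra hge
              push_neg at hge
              have : b * r ^ k ≤ b * m := Nat.mul_le_mul_left b hge
              have : b * m ≤ n := by rw [mul_comm]; exact hmb
              omega
            rw [Nat.div_eq_of_lt hlt, Nat.zero_mod]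
        rw [Finset.sum_congr rfl hterm, digits_sum hr1 (n + 1) m hmN]
    have hsum : s.sum = n := by rw [← glMap_sum r s, hkey, t.parts_sum]
    refine ⟨⟨s, fun ha => hspos _ ha, hsum⟩, ?_, ?_⟩
    · simp only [Finset.mem_filter, Finset.mem_univ, true_and]
      intro i
      rw [hs, count_fromCounts]
      split
      · exact Nat.mod_lt _ (by omega)
      · omega
    · exact Nat.Partition.ext hkey
end

section
/- For a tuple r = (r_1, ..., r_m) of pairwise coprime integers ≥ 2 and a positive integer j not divisible by any r_i, the sum over all r-class regular partitions ρ of n of the multiplicity of j as a part of ρ equals the sum over all tuples (k_1, ..., k_m) of nonnegative integers and over all r-class regular partitions ρ of n of the number of part-sizes i whose multiplicity m_i(ρ) is at least r_1^{k_1}···r_m^{k_m}·j. -/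
open Nat Finset
open scoped Classical

/-- The set of `(r 0, …, r (m-1))`-class regular partitions of `n`. -/
noncomputable def CPm (m : ℕ) (r : Fin m → ℕ) (n : ℕ) : Finset (n.Partition) :=
  Finset.univ.filter (fun l => ∀ p ∈ l.parts, ∀ i, ¬ r i ∣ p)

/-- The number of part-sizes `i` whose multiplicity in `ρ` is at least `j` (for `j ≥ 1`). -/
noncomputable def numGE {n : ℕ} (ρ : n.Partition) (j : ℕ) : ℕ :=
  (ρ.parts.toFinset.filter (fun i => j ≤ ρ.parts.count i)).card

/-- `V r j n`: the total multiplicity of the part `j` over all class regular partitions. -/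
noncomputable def Vm (m : ℕ) (r : Fin m → ℕ) (j n : ℕ) : ℕ :=
  ∑ ρ ∈ CPm m r n, ρ.parts.count j

/-- `W r j n`: the total number of part-sizes of multiplicity `≥ j` over class regular
partitions. -/
noncomputable def Wm (m : ℕ) (r : Fin m → ℕ) (j n : ℕ) : ℕ :=
  ∑ ρ ∈ CPm m r n, numGE ρ j

section Aux

variable {m : ℕ} {r : Fin m → ℕ}

/-! ### Number-theoretic lemmas -/

lemma prod_pow_dvd_aux (hcop : ∀ i j, i ≠ j → Nat.Coprime (r i) (r j)) (k : Fin m → ℕ) {s : ℕ}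
    (h : ∀ a, r a ^ k a ∣ s) : (∏ a, r a ^ k a) ∣ s := by
  classical
  suffices H : ∀ t : Finset (Fin m), (∏ a ∈ t, r a ^ k a) ∣ s from H Finset.univ
  intro t
  induction t using Finset.induction_on with
  | empty => simpa using one_dvd s
  | @insert a t ha ih =>
    rw [Finset.prod_insert ha]
    have hc : Nat.Coprime (r a ^ k a) (∏ b ∈ t, r b ^ k b) :=
      Nat.Coprime.pow_left _ (Nat.Coprime.prod_right fun b hb =>
        Nat.Coprime.pow_right _ (hcop a b (fun hab => ha (hab ▸ hb))))
    exact hc.mul_dvd_of_dvd_of_dvd (h a) ih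

lemma maxPowDiv_eq_zero_aux {p s : ℕ} (h : ¬ p ∣ s) : p.maxPowDiv s = 0 := by
  by_contra hne
  exact h (dvd_trans (dvd_pow_self p hne) (Nat.maxPowDiv.pow_dvd (p := p) (n := s)))

lemma P_dvd_aux (hcop : ∀ i j, i ≠ j → Nat.Coprime (r i) (r j)) (s : ℕ) :
    (∏ a, r a ^ (r a).maxPowDiv s) ∣ s :=
  prod_pow_dvd_aux hcop _ fun a => Nat.maxPowDiv.pow_dvd

lemma quot_not_dvd_aux (hr : ∀ i, 2 ≤ r i) (hcop : ∀ i j, i ≠ j → Nat.Coprime (r i) (r j))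
    {s : ℕ} (hs : 0 < s) (a : Fin m) :
    ¬ r a ∣ s / ∏ b, r b ^ (r b).maxPowDiv s := by
  intro h
  have hd : (∏ b, r b ^ (r b).maxPowDiv s) ∣ s := P_dvd_aux hcop s
  have hs' : s / (∏ b, r b ^ (r b).maxPowDiv s) * (∏ b, r b ^ (r b).maxPowDiv s) = s :=
    Nat.div_mul_cancel hd
  have h1 : r a ^ ((r a).maxPowDiv s + 1) ∣ s := by
    have h2 : r a * (∏ b, r b ^ (r b).maxPowDiv s) ∣ s := by
      calc r a * (∏ b, r b ^ (r b).maxPowDiv s)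
          ∣ (s / (∏ b, r b ^ (r b).maxPowDiv s)) * (∏ b, r b ^ (r b).maxPowDiv s) :=
            mul_dvd_mul h dvd_rfl
        _ = s := hs'
    refine dvd_trans ?_ h2
    have hP' : (∏ b, r b ^ (r b).maxPowDiv s)
        = r a ^ (r a).maxPowDiv s * ∏ b ∈ Finset.univ.erase a, r b ^ (r b).maxPowDiv s :=
      (Finset.mul_prod_erase _ _ (Finset.mem_univ a)).symm
    rw [hP', pow_succ]
    exact ⟨∏ b ∈ Finset.univ.erase a, r b ^ (r b).maxPowDiv s, by ring⟩
  have : (r a).maxPowDiv s + 1 ≤ (r a).maxPowDiv s :=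
    (pow_dvd_iff_le_padicValNat (p := r a) (by have := hr a; omega) hs.ne').mp h1
  omega

lemma maxPow_of_form_aux (hr : ∀ i, 2 ≤ r i) (hcop : ∀ i j, i ≠ j → Nat.Coprime (r i) (r j))
    {k : Fin m → ℕ} {i : ℕ} (hi : 0 < i) (hreg : ∀ a, ¬ r a ∣ i) (a : Fin m) :
    (r a).maxPowDiv (i * ∏ b, r b ^ k b) = k a := by
  have hQpos : 0 < i * ∏ b ∈ Finset.univ.erase a, r b ^ k b :=
    Nat.mul_pos hi (Finset.prod_pos fun b _ => pow_pos (lt_of_lt_of_le two_pos (hr b)) _)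
  have hrw : i * ∏ b, r b ^ k b
      = r a ^ k a * (i * ∏ b ∈ Finset.univ.erase a, r b ^ k b) := by
    rw [← Finset.mul_prod_erase _ _ (Finset.mem_univ a)]; ring
  rw [hrw]; change padicValNat (r a) _ = k a; rw [Nat.maxPowDiv.base_pow_mul (hr a) hQpos.ne']
  have hnd : ¬ r a ∣ i * ∏ b ∈ Finset.univ.erase a, r b ^ k b := by
    intro h
    have hc : Nat.Coprime (r a) (∏ b ∈ Finset.univ.erase a, r b ^ k b) :=
      Nat.Coprime.prod_right fun b hb =>
        Nat.Coprime.pow_right _ (hcop a b (Finset.ne_of_mem_erase hb).symm)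
    exact hreg a (hc.dvd_of_dvd_mul_right h)
  rw [show padicValNat (r a) _ = 0 from maxPowDiv_eq_zero_aux hnd, zero_add]

/-! ### Partition lemmas -/

lemma count_mul_le_sum_aux (s : Multiset ℕ) (i : ℕ) : s.count i * i ≤ s.sum := by
  set c := s.count i with hc
  have h : Multiset.replicate c i ≤ s := Multiset.le_count_iff_replicate_le.mp le_rfl
  obtain ⟨w, hw⟩ := Multiset.le_iff_exists_add.mp h
  rw [hw, Multiset.sum_add, Multiset.sum_replicate, smul_eq_mul]
  exact Nat.le_add_right _ _

/-- Remove `t` copies of the part `i` (junk value if there aren't that many). -/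
noncomputable def subP (n i t : ℕ) (ρ : n.Partition) : Nat.Partition (n - t * i) :=
  if h : Multiset.replicate t i ≤ ρ.parts then
    { parts := ρ.parts - Multiset.replicate t i
      parts_pos := fun hx => ρ.parts_pos (Multiset.mem_of_le tsub_le_self hx)
      parts_sum := by
        obtain ⟨w, hw⟩ := Multiset.le_iff_exists_add.mp h
        have hsum := ρ.parts_sum
        rw [hw, Multiset.sum_add, Multiset.sum_replicate, smul_eq_mul] at hsum
        rw [hw, add_tsub_cancel_left]
        omega }
  else
    { parts := Multiset.replicate (n - t * i) 1
      parts_pos := fun hx => by rcases Multiset.eq_of_mem_replicate hx with rfl; exact one_pos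
      parts_sum := by simp }

/-- Add `t` copies of the part `i`. -/
def addP (n i t : ℕ) (hi : 0 < i) (hle : t * i ≤ n) (σ : Nat.Partition (n - t * i)) :
    n.Partition where
  parts := σ.parts + Multiset.replicate t i
  parts_pos := fun hx => by
    rcases Multiset.mem_add.mp hx with h | h
    · exact σ.parts_pos h
    · rcases Multiset.eq_of_mem_replicate h with rfl; exact hi
  parts_sum := by
    rw [Multiset.sum_add, Multiset.sum_replicate, smul_eq_mul, σ.parts_sum]
    omega

lemma card_filter_count_aux (n : ℕ) {i t : ℕ} (hi : 0 < i) (hreg : ∀ a, ¬ r a ∣ i)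
    (hle : t * i ≤ n) :
    ((CPm m r n).filter (fun ρ => t ≤ ρ.parts.count i)).card = (CPm m r (n - t * i)).card := by
  refine Finset.card_nbij' (subP n i t) (addP n i t hi hle) ?_ ?_ ?_ ?_
  · intro ρ hρ
    simp only [Finset.mem_coe] at hρ ⊢
    rw [Finset.mem_filter] at hρ
    obtain ⟨hρ1, hρ2⟩ := hρ
    have hrep : Multiset.replicate t i ≤ ρ.parts := Multiset.le_count_iff_replicate_le.mp hρ2
    rw [CPm, Finset.mem_filter] at hρ1 ⊢
    refine ⟨Finset.mem_univ _, ?_⟩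
    intro p hp a
    rw [subP, dif_pos hrep] at hp
    exact hρ1.2 p (Multiset.mem_of_le tsub_le_self hp) a
  · intro σ hσ
    simp only [Finset.mem_coe] at hσ ⊢
    rw [CPm, Finset.mem_filter] at hσ
    rw [Finset.mem_filter]
    constructor
    · rw [CPm, Finset.mem_filter]
      refine ⟨Finset.mem_univ _, ?_⟩
      intro p hp a
      rcases Multiset.mem_add.mp hp with h | h
      · exact hσ.2 p h a
      · rcases Multiset.eq_of_mem_replicate h with rfl; exact hreg a
    · show t ≤ Multiset.count i (σ.parts + Multiset.replicate t i)
      rw [Multiset.count_add, Multiset.count_replicate_self]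
      omega
  · intro ρ hρ
    simp only [Finset.mem_coe] at hρ
    rw [Finset.mem_filter] at hρ
    have hrep : Multiset.replicate t i ≤ ρ.parts := Multiset.le_count_iff_replicate_le.mp hρ.2
    ext1
    show (subP n i t ρ).parts + Multiset.replicate t i = ρ.parts
    rw [subP, dif_pos hrep]
    exact tsub_add_cancel_of_le hrep
  · intro σ hσ
    have hrep : Multiset.replicate t i ≤ (addP n i t hi hle σ).parts :=
      Multiset.le_add_left _ _
    ext1
    rw [subP, dif_pos hrep]
    show σ.parts + Multiset.replicate t i - Multiset.replicate t i = σ.parts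
    exact add_tsub_cancel_right _ _

lemma filter_count_empty_aux (n : ℕ) {i t : ℕ} (hgt : n < t * i) :
    ((CPm m r n).filter (fun ρ => t ≤ ρ.parts.count i)).card = 0 := by
  rw [Finset.card_eq_zero, Finset.filter_eq_empty_iff]
  intro ρ _
  intro hc
  have h1 : ρ.parts.count i * i ≤ n := by
    have := count_mul_le_sum_aux ρ.parts i
    rwa [ρ.parts_sum] at this
  have h2 : t * i ≤ ρ.parts.count i * i := Nat.mul_le_mul_right _ hc
  omega

lemma A_closed_aux (n : ℕ) {i t : ℕ} (hi : 0 < i) (hreg : ∀ a, ¬ r a ∣ i) :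
    ((CPm m r n).filter (fun ρ => t ≤ ρ.parts.count i)).card
      = if t * i ≤ n then (CPm m r (n - t * i)).card else 0 := by
  split_ifs with h
  · exact card_filter_count_aux n hi hreg h
  · exact filter_count_empty_aux n (by omega)

/-! ### Sum rewrites -/

lemma Vm_eq_aux (j n : ℕ) (hj : 0 < j) :
    Vm m r j n = ∑ s ∈ Icc 1 n, ((CPm m r n).filter (fun ρ => s ≤ ρ.parts.count j)).card := by
  rw [Vm]
  have key : ∀ ρ ∈ CPm m r n,
      ρ.parts.count j = ∑ s ∈ Icc 1 n, if s ≤ ρ.parts.count j then 1 else 0 := by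
    intro ρ _
    have hc : ρ.parts.count j ≤ n := by
      have h1 := count_mul_le_sum_aux ρ.parts j
      rw [ρ.parts_sum] at h1
      have h2 : ρ.parts.count j ≤ ρ.parts.count j * j := Nat.le_mul_of_pos_right _ hj
      omega
    rw [← Finset.card_filter]
    have : (Icc 1 n).filter (fun s => s ≤ ρ.parts.count j) = Icc 1 (ρ.parts.count j) := by
      ext x; simp only [Finset.mem_filter, Finset.mem_Icc]; omega
    rw [this, Nat.card_Icc]
    omega
  rw [Finset.sum_congr rfl key, Finset.sum_comm]
  exact Finset.sum_congr rfl fun s _ => (Finset.card_filter _ _).symm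

lemma Wm_zero_aux {t n : ℕ} (h : n < t) : Wm m r t n = 0 := by
  rw [Wm]
  refine Finset.sum_eq_zero fun ρ _ => ?_
  rw [numGE, Finset.card_eq_zero, Finset.filter_eq_empty_iff]
  intro x hx
  rw [Multiset.mem_toFinset] at hx
  have hx1 : 0 < x := ρ.parts_pos hx
  have h1 := count_mul_le_sum_aux ρ.parts x
  rw [ρ.parts_sum] at h1
  have h2 : ρ.parts.count x ≤ ρ.parts.count x * x := Nat.le_mul_of_pos_right _ hx1
  omega

lemma Wm_eq_aux (t n : ℕ) (ht : 0 < t) :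
    Wm m r t n = ∑ i ∈ Icc 1 n, if (∀ a, ¬ r a ∣ i) then
      ((CPm m r n).filter (fun ρ => t ≤ ρ.parts.count i)).card else 0 := by
  rw [Wm]
  have key : ∀ ρ ∈ CPm m r n,
      numGE ρ t = ∑ i ∈ Icc 1 n,
        if (∀ a, ¬ r a ∣ i) ∧ t ≤ ρ.parts.count i then 1 else 0 := by
    intro ρ hρ
    rw [CPm, Finset.mem_filter] at hρ
    rw [numGE, ← Finset.card_filter]
    congr 1
    ext x
    simp only [Finset.mem_filter, Multiset.mem_toFinset, Finset.mem_Icc]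
    constructor
    · rintro ⟨hx, hcnt⟩
      have hx1 : 0 < x := ρ.parts_pos hx
      have hxn : x ≤ n := by
        have h1 := count_mul_le_sum_aux ρ.parts x
        rw [ρ.parts_sum] at h1
        have h2 : 1 ≤ ρ.parts.count x := Multiset.one_le_count_iff_mem.mpr hx
        nlinarith
      exact ⟨⟨hx1, hxn⟩, fun a => hρ.2 x hx a, hcnt⟩
    · rintro ⟨_, _, hcnt⟩
      refine ⟨?_, hcnt⟩
      rw [← Multiset.one_le_count_iff_mem]
      omega
  rw [Finset.sum_congr rfl key, Finset.sum_comm]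
  refine Finset.sum_congr rfl fun i _ => ?_
  split_ifs with hreg
  · rw [← Finset.card_filter]
    congr 1
    ext ρ
    simp [hreg]
  · refine Finset.sum_eq_zero fun ρ _ => ?_
    rw [if_neg]
    tauto

end Aux

theorem V_eq_tsum_W (m : ℕ) (r : Fin m → ℕ) (hr : ∀ i, 2 ≤ r i)
    (hcop : ∀ i j, i ≠ j → Nat.Coprime (r i) (r j)) (j n : ℕ) (hj : 0 < j)
    (hjr : ∀ i, ¬ r i ∣ j) :
    Vm m r j n = ∑' k : Fin m → ℕ, Wm m r ((∏ i, r i ^ k i) * j) n := by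
  classical
  have hrpos : ∀ a, 0 < r a := fun a => lt_of_lt_of_le two_pos (hr a)
  have hprodpos : ∀ k : Fin m → ℕ, 0 < ∏ i, r i ^ k i :=
    fun k => Finset.prod_pos fun a _ => pow_pos (hrpos a) _
  set S : Finset (Fin m → ℕ) := Fintype.piFinset fun _ => Finset.range (n + 1) with hS
  -- zero terms outside S
  have hzero : ∀ k ∉ S, Wm m r ((∏ i, r i ^ k i) * j) n = 0 := by
    intro k hk
    obtain ⟨a, ha⟩ : ∃ a, n + 1 ≤ k a := by
      by_contra hcon
      push_neg at hcon
      exact hk (Fintype.mem_piFinset.mpr fun a => Finset.mem_range.mpr (hcon a))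
    apply Wm_zero_aux
    have h1 : r a ^ k a ∣ ∏ i, r i ^ k i := Finset.dvd_prod_of_mem _ (Finset.mem_univ a)
    have h2 : r a ^ k a ≤ ∏ i, r i ^ k i := Nat.le_of_dvd (hprodpos k) h1
    have h3 : 2 ^ k a ≤ r a ^ k a := Nat.pow_le_pow_left (hr a) _
    have h4 : k a < 2 ^ k a := Nat.lt_two_pow_self
    have h5 : (∏ i, r i ^ k i) ≤ (∏ i, r i ^ k i) * j := Nat.le_mul_of_pos_right _ hj
    omega
  rw [tsum_eq_sum hzero]
  -- closed form of LHS
  rw [Vm_eq_aux j n hj]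
  rw [Finset.sum_congr rfl (fun s _ => A_closed_aux (t := s) n hj hjr)]
  -- closed form of RHS
  have hR : ∀ k ∈ S, Wm m r ((∏ i, r i ^ k i) * j) n
      = ∑ i ∈ Icc 1 n, if (∀ a, ¬ r a ∣ i) ∧ ((∏ b, r b ^ k b) * j) * i ≤ n then
          (CPm m r (n - ((∏ b, r b ^ k b) * j) * i)).card else 0 := by
    intro k _
    rw [Wm_eq_aux _ _ (Nat.mul_pos (hprodpos k) hj)]
    refine Finset.sum_congr rfl fun i hi => ?_
    rw [Finset.mem_Icc] at hi
    by_cases hreg : ∀ a, ¬ r a ∣ i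
    · rw [if_pos hreg, A_closed_aux n (by omega) hreg]
      by_cases hc : ((∏ b, r b ^ k b) * j) * i ≤ n
      · rw [if_pos hc, if_pos ⟨hreg, hc⟩]
      · rw [if_neg hc, if_neg (by tauto)]
    · rw [if_neg hreg, if_neg (by tauto)]
  rw [Finset.sum_congr rfl hR]
  rw [← Finset.sum_product']
  rw [← Finset.sum_filter, ← Finset.sum_filter]
  -- the final reindexing bijection
  refine Finset.sum_nbij'
    (fun s => (fun a => (r a).maxPowDiv s, s / ∏ b, r b ^ (r b).maxPowDiv s))
    (fun p => p.2 * ∏ b, r b ^ p.1 b) ?_ ?_ ?_ ?_ ?_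
  · -- forward membership
    intro s hs
    rw [Finset.mem_filter, Finset.mem_Icc] at hs
    obtain ⟨⟨hs1, hs2⟩, hsj⟩ := hs
    have hspos : 0 < s := hs1
    have hd : (∏ b, r b ^ (r b).maxPowDiv s) ∣ s := P_dvd_aux hcop s
    have hPpos : 0 < ∏ b, r b ^ (r b).maxPowDiv s := hprodpos _
    have hdiv : s / (∏ b, r b ^ (r b).maxPowDiv s) * (∏ b, r b ^ (r b).maxPowDiv s) = s :=
      Nat.div_mul_cancel hd
    rw [Finset.mem_filter, Finset.mem_product]
    refine ⟨⟨Fintype.mem_piFinset.mpr fun a => Finset.mem_range.mpr ?_,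
        Finset.mem_Icc.mpr ⟨?_, ?_⟩⟩, fun a => quot_not_dvd_aux hr hcop hspos a, ?_⟩
    · -- maxPowDiv bound
      show (r a).maxPowDiv s < n + 1
      have h1 : r a ^ (r a).maxPowDiv s ∣ s := Nat.maxPowDiv.pow_dvd
      have h2 : r a ^ (r a).maxPowDiv s ≤ s := Nat.le_of_dvd hspos h1
      have h3 : 2 ^ (r a).maxPowDiv s ≤ r a ^ (r a).maxPowDiv s := Nat.pow_le_pow_left (hr a) _
      have h4 : (r a).maxPowDiv s < 2 ^ (r a).maxPowDiv s := Nat.lt_two_pow_self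
      omega
    · exact Nat.div_pos (Nat.le_of_dvd hspos hd) hPpos
    · exact le_trans (Nat.div_le_self _ _) hs2
    · show (∏ b, r b ^ (r b).maxPowDiv s) * j * (s / ∏ b, r b ^ (r b).maxPowDiv s) ≤ n
      calc (∏ b, r b ^ (r b).maxPowDiv s) * j * (s / ∏ b, r b ^ (r b).maxPowDiv s)
          = (s / (∏ b, r b ^ (r b).maxPowDiv s) * (∏ b, r b ^ (r b).maxPowDiv s)) * j := by
            ring
        _ = s * j := by rw [hdiv]
        _ ≤ n := hsj
  · -- backward membership
    rintro ⟨k, i⟩ hp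
    simp only [Finset.mem_filter, Finset.mem_product, Finset.mem_Icc] at hp
    obtain ⟨⟨hk, hi⟩, hreg, hc⟩ := hp
    simp only [Finset.mem_filter, Finset.mem_Icc]
    have heq : i * (∏ b, r b ^ k b) * j = (∏ b, r b ^ k b) * j * i := by ring
    have hs1 : 0 < i * ∏ b, r b ^ k b := Nat.mul_pos (by omega) (hprodpos k)
    have hle : i * (∏ b, r b ^ k b) * j ≤ n := by rw [heq]; exact hc
    refine ⟨⟨hs1, ?_⟩, hle⟩
    have : i * (∏ b, r b ^ k b) ≤ i * (∏ b, r b ^ k b) * j := Nat.le_mul_of_pos_right _ hj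
    omega
  · -- left inverse
    intro s hs
    rw [Finset.mem_filter, Finset.mem_Icc] at hs
    exact Nat.div_mul_cancel (P_dvd_aux hcop s)
  · -- right inverse
    rintro ⟨k, i⟩ hp
    simp only [Finset.mem_filter, Finset.mem_product, Finset.mem_Icc] at hp
    obtain ⟨⟨hk, hi⟩, hreg, hc⟩ := hp
    have hK : ∀ a, (r a).maxPowDiv (i * ∏ b, r b ^ k b) = k a :=
      maxPow_of_form_aux hr hcop (by omega) hreg
    have h1 : (fun a => (r a).maxPowDiv (i * ∏ b, r b ^ k b)) = k := funext hK
    have h2 : (∏ b, r b ^ (r b).maxPowDiv (i * ∏ c, r c ^ k c)) = ∏ b, r b ^ k b :=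
      Finset.prod_congr rfl fun b _ => by rw [hK b]
    have h3 : i * (∏ b, r b ^ k b) / (∏ b, r b ^ (r b).maxPowDiv (i * ∏ c, r c ^ k c)) = i := by
      rw [h2, Nat.mul_div_assoc i dvd_rfl, Nat.div_self (hprodpos k), mul_one]
    exact Prod.ext h1 h3
  · -- values agree
    intro s hs
    rw [Finset.mem_filter, Finset.mem_Icc] at hs
    obtain ⟨⟨hs1, hs2⟩, hsj⟩ := hs
    have hd : (∏ b, r b ^ (r b).maxPowDiv s) ∣ s := P_dvd_aux hcop s
    have hdiv : s / (∏ b, r b ^ (r b).maxPowDiv s) * (∏ b, r b ^ (r b).maxPowDiv s) = s :=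
      Nat.div_mul_cancel hd
    have heq : (∏ b, r b ^ (r b).maxPowDiv s) * j * (s / ∏ b, r b ^ (r b).maxPowDiv s)
        = s * j := by
      calc (∏ b, r b ^ (r b).maxPowDiv s) * j * (s / ∏ b, r b ^ (r b).maxPowDiv s)
          = (s / (∏ b, r b ^ (r b).maxPowDiv s) * (∏ b, r b ^ (r b).maxPowDiv s)) * j := by
            ring
        _ = s * j := by rw [hdiv]
    rw [heq]
end

section
/- For r ≥ 2, the product over all r-class regular partitions ρ of n of Π_i m_i(ρ)! equals r^{c_{r,n}} times the product over all r-class regular partitions ρ of n of the product of the parts of ρ, where c_{r,n} = Σ_{j: r∤j} Σ_{k ≥ 1} k · W_{r, r^k j, n}. -/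
open Nat Finset
open scoped Classical

/-- The set of `r`-class regular partitions of `n`: no part divisible by `r`. -/
noncomputable def CP (r n : ℕ) : Finset (n.Partition) :=
  Finset.univ.filter (fun l => ∀ p ∈ l.parts, ¬ r ∣ p)

/-- `W r j n = Σ_{ρ ∈ CP_{r,n}} #{i : m_i(ρ) ≥ j}`. -/
noncomputable def W (r j n : ℕ) : ℕ := ∑ ρ ∈ CP r n, numGE ρ j

/-- `c_{r,n} = Σ_{j ≥ 1, r ∤ j} Σ_{k ≥ 1} k · W_{r, r^k j, n}` (the `k = 0` summand vanishes). -/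
noncomputable def cExp (r n : ℕ) : ℕ :=
  ∑' j : ℕ, ∑' k : ℕ, if ¬ r ∣ j then k * W r (r ^ k * j) n else 0

noncomputable def A (r n i j : ℕ) : ℕ :=
  ((CP r n).filter (fun ρ => j ≤ ρ.parts.count i)).card

lemma count_le_n {n : ℕ} (ρ : n.Partition) (i : ℕ) : ρ.parts.count i ≤ n := by
  calc ρ.parts.count i ≤ Multiset.card ρ.parts := Multiset.count_le_card _ _
  _ = Multiset.card ρ.parts • 1 := by simp
  _ ≤ ρ.parts.sum := Multiset.card_nsmul_le_sum (fun x hx => ρ.parts_pos hx)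
  _ = n := ρ.parts_sum

lemma part_le_n {n : ℕ} (ρ : n.Partition) {i : ℕ} (h : i ∈ ρ.parts) : i ≤ n :=
  ρ.parts_sum ▸ Multiset.single_le_sum (fun x _ => Nat.zero_le x) i h

lemma mem_CP {r n : ℕ} {ρ : n.Partition} : ρ ∈ CP r n ↔ ∀ p ∈ ρ.parts, ¬ r ∣ p := by
  simp [CP]

lemma numGE_eq {n : ℕ} (ρ : n.Partition) {j : ℕ} (hj : 1 ≤ j) :
    numGE ρ j = ((Icc 1 n).filter (fun i => j ≤ ρ.parts.count i)).card := by
  unfold numGE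
  congr 1
  ext i
  simp only [Finset.mem_filter, Multiset.mem_toFinset, Finset.mem_Icc]
  constructor
  · rintro ⟨hi, hc⟩
    exact ⟨⟨ρ.parts_pos hi, part_le_n ρ hi⟩, hc⟩
  · rintro ⟨_, hc⟩
    exact ⟨Multiset.count_pos.mp (lt_of_lt_of_le hj hc), hc⟩

lemma A_eq_zero_of_dvd {r n i j : ℕ} (hi : r ∣ i) (hj : 1 ≤ j) : A r n i j = 0 := by
  rw [A, Finset.card_eq_zero, Finset.filter_eq_empty_iff]
  intro ρ hρ hc
  exact (mem_CP.mp hρ i (Multiset.count_pos.mp (lt_of_lt_of_le hj hc))) hi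

lemma A_eq_zero_of_gt {r n i j : ℕ} (h : n < j) : A r n i j = 0 := by
  rw [A, Finset.card_eq_zero, Finset.filter_eq_empty_iff]
  intro ρ _ hc
  exact absurd (le_trans hc (count_le_n ρ i)) (not_le.mpr h)

lemma W_eq_sum {r n j : ℕ} (hj : 1 ≤ j) : W r j n = ∑ i ∈ Icc 1 n, A r n i j := by
  unfold W A
  have : ∀ ρ ∈ CP r n, numGE ρ j = ∑ i ∈ Icc 1 n, if j ≤ ρ.parts.count i then 1 else 0 := by
    intro ρ _
    rw [numGE_eq ρ hj, Finset.card_filter]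
  rw [Finset.sum_congr rfl this, Finset.sum_comm]
  exact Finset.sum_congr rfl (fun i _ => (Finset.card_filter _ _).symm)

lemma W_eq_zero {r n j : ℕ} (h : n < j) : W r j n = 0 := by
  unfold W
  apply Finset.sum_eq_zero
  intro ρ _
  rw [numGE, Finset.card_eq_zero, Finset.filter_eq_empty_iff]
  intro i _ hc
  exact absurd (le_trans hc (count_le_n ρ i)) (not_le.mpr h)

lemma exists_decomp {r : ℕ} (hr : 2 ≤ r) : ∀ j, 1 ≤ j → ∃ k j', ¬ r ∣ j' ∧ r ^ k * j' = j := by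
  intro j
  induction j using Nat.strong_induction_on with
  | _ j ih =>
    intro hj
    by_cases hd : r ∣ j
    · obtain ⟨m, rfl⟩ := hd
      have hm : 1 ≤ m := by
        rcases Nat.eq_zero_or_pos m with h | h
        · subst h; simp at hj
        · exact h
      have hlt : m < r * m := by nlinarith
      obtain ⟨k, j', h1, h2⟩ := ih m hlt hm
      exact ⟨k + 1, j', h1, by rw [pow_succ, mul_comm (r^k) r, mul_assoc, h2]⟩
    · exact ⟨0, j, hd, by ring⟩


lemma prod_reindex {M : Type*} [CommMonoid M] (r n : ℕ) (hr : 2 ≤ r) (g : ℕ → M)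
    (hg : ∀ j, 1 ≤ j → n < j → g j = 1) :
    ∏ j ∈ Icc 1 n, g j =
      ∏ j' ∈ (Icc 1 n).filter (fun j => ¬ r ∣ j), ∏ k ∈ range (n + 1), g (r ^ k * j') := by
  rw [← Finset.prod_product']
  set s := ((Icc 1 n).filter (fun j => ¬ r ∣ j)) ×ˢ range (n + 1) with hs
  have key : ∀ a k b l : ℕ, ¬ r ∣ a → r ^ k * a = r ^ l * b → k ≤ l → a = r ^ (l - k) * b := by
    intro a k b l ha h hkl
    have hrk : 0 < r ^ k := pow_pos (by omega) k
    apply Nat.eq_of_mul_eq_mul_left hrk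
    rw [← mul_assoc, ← pow_add, show k + (l - k) = l by omega, h]
  have hinj : Set.InjOn (fun p : ℕ × ℕ => r ^ p.2 * p.1) s := by
    rintro ⟨a, k⟩ ha ⟨b, l⟩ hb h
    rw [Finset.mem_coe] at ha hb
    simp only [hs, Finset.mem_product, Finset.mem_filter, Finset.mem_Icc] at ha hb
    simp only at h
    have main : ∀ a k b l : ℕ, ¬ r ∣ a → ¬ r ∣ b → r ^ k * a = r ^ l * b → k ≤ l → a = b ∧ k = l := by
      intro a k b l ha hb h hkl
      have h2 := key a k b l ha h hkl
      rcases Nat.eq_zero_or_pos (l - k) with hm | hm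
      · rw [hm, pow_zero, one_mul] at h2
        exact ⟨h2, by omega⟩
      · exfalso
        apply ha
        rw [h2]
        exact Dvd.intro (r ^ (l - k - 1) * b) (by rw [← mul_assoc, ← pow_succ']; congr 2; omega)
    rcases le_total k l with hkl | hkl
    · obtain ⟨h1, h2⟩ := main a k b l ha.1.2 hb.1.2 h hkl
      simp [h1, h2]
    · obtain ⟨h1, h2⟩ := main b l a k hb.1.2 ha.1.2 h.symm hkl
      simp [h1, h2]
  rw [← Finset.prod_image (fun p hp q hq => hinj hp hq)]
  apply Finset.prod_subset
  · intro j hj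
    rw [Finset.mem_Icc] at hj
    obtain ⟨k, j', hj', hk⟩ := exists_decomp hr j hj.1
    apply Finset.mem_image.mpr
    refine ⟨⟨j', k⟩, ?_, hk⟩
    have hj'1 : 1 ≤ j' := by
      rcases Nat.eq_zero_or_pos j' with h0 | h0
      · exfalso; apply hj'; simp [h0]
      · exact h0
    have hj'n : j' ≤ n := by
      have : j' ≤ r ^ k * j' := Nat.le_mul_of_pos_left _ (pow_pos (by omega) k)
      omega
    have hkn : k ≤ n := by
      have h1 : k < 2 ^ k := Nat.lt_two_pow_self
      have h2 : 2 ^ k ≤ r ^ k := Nat.pow_le_pow_left hr k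
      have h3 : r ^ k ≤ r ^ k * j' := Nat.le_mul_of_pos_right _ hj'1
      omega
    simp only [hs, Finset.mem_product, Finset.mem_filter, Finset.mem_Icc, Finset.mem_range]
    exact ⟨⟨⟨hj'1, hj'n⟩, hj'⟩, by omega⟩
  · intro x hx hxn
    rw [Finset.mem_image] at hx
    obtain ⟨⟨a, k⟩, hp, rfl⟩ := hx
    simp only [hs, Finset.mem_product, Finset.mem_filter, Finset.mem_Icc] at hp
    have h1 : 1 ≤ r ^ k * a := Nat.mul_pos (pow_pos (by omega) k) hp.1.1.1
    have : n < r ^ k * a := by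
      by_contra hle
      exact hxn (Finset.mem_Icc.mpr ⟨h1, not_lt.mp hle⟩)
    exact hg _ h1 this

/-- Replace `s` copies of part `a` by `t` copies of part `b`, where `s * a = t * b`. -/
def move {n : ℕ} (a b s t : ℕ) (hb : 0 < b) (hst : s * a = t * b)
    (ρ : n.Partition) (hle : Multiset.replicate s a ≤ ρ.parts) : n.Partition where
  parts := (ρ.parts - Multiset.replicate s a) + Multiset.replicate t b
  parts_pos := by
    intro x hx
    rcases Multiset.mem_add.mp hx with h | h
    · exact ρ.parts_pos (Multiset.mem_of_le (Multiset.sub_le_self _ _) h)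
    · rw [Multiset.eq_of_mem_replicate h]; exact hb
  parts_sum := by
    rw [Multiset.sum_add, Multiset.sum_replicate, smul_eq_mul]
    have h1 : (ρ.parts - Multiset.replicate s a).sum + (Multiset.replicate s a).sum
        = ρ.parts.sum := by
      rw [← Multiset.sum_add, tsub_add_cancel_of_le hle]
    rw [Multiset.sum_replicate, smul_eq_mul] at h1
    have h2 := ρ.parts_sum
    omega

lemma move_parts {n : ℕ} (a b s t : ℕ) (hb : 0 < b) (hst : s * a = t * b)
    (ρ : n.Partition) (hle : Multiset.replicate s a ≤ ρ.parts) :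
    (move a b s t hb hst ρ hle).parts
      = (ρ.parts - Multiset.replicate s a) + Multiset.replicate t b := rfl

lemma A_symm {r n : ℕ} (hr : 2 ≤ r) {a b : ℕ} (ha : ¬ r ∣ a) (hb : ¬ r ∣ b)
    {s t : ℕ} (hst : s * a = t * b) : A r n a s = A r n b t := by
  unfold A
  have hbpos : 0 < b := by
    rcases Nat.eq_zero_or_pos b with h | h
    · exact absurd (h ▸ dvd_zero r) hb
    · exact h
  have hapos : 0 < a := by
    rcases Nat.eq_zero_or_pos a with h | h
    · exact absurd (h ▸ dvd_zero r) ha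
    · exact h
  have key : ∀ (a b s t : ℕ) (hbp : 0 < b) (hst' : s * a = t * b), ¬ r ∣ b →
      ∀ (ρ : n.Partition) (hρ : ρ ∈ (CP r n).filter (fun ρ => s ≤ ρ.parts.count a)),
      move a b s t hbp hst' ρ
          (Multiset.le_count_iff_replicate_le.mp (Finset.mem_filter.mp hρ).2)
        ∈ (CP r n).filter (fun ρ => t ≤ ρ.parts.count b) := by
    intro a b s t hbp hst' hbdvd ρ hρ
    obtain ⟨hρCP, hρc⟩ := Finset.mem_filter.mp hρ
    rw [Finset.mem_filter]
    constructor
    · rw [mem_CP]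
      intro p hp
      rw [move_parts] at hp
      rcases Multiset.mem_add.mp hp with h | h
      · exact mem_CP.mp hρCP p (Multiset.mem_of_le (Multiset.sub_le_self _ _) h)
      · rw [Multiset.eq_of_mem_replicate h]; exact hbdvd
    · rw [move_parts, Multiset.count_add, Multiset.count_replicate_self]
      omega
  refine Finset.card_bij'
    (fun ρ hρ => move a b s t hbpos hst ρ
      (Multiset.le_count_iff_replicate_le.mp (Finset.mem_filter.mp hρ).2))
    (fun σ hσ => move b a t s hapos hst.symm σ
      (Multiset.le_count_iff_replicate_le.mp (Finset.mem_filter.mp hσ).2))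
    (fun ρ hρ => key a b s t hbpos hst hb ρ hρ)
    (fun σ hσ => key b a t s hapos hst.symm ha σ hσ) ?_ ?_
  · intro ρ hρ
    apply Nat.Partition.ext
    rw [move_parts, move_parts, add_tsub_cancel_right,
      tsub_add_cancel_of_le (Multiset.le_count_iff_replicate_le.mp (Finset.mem_filter.mp hρ).2)]
  · intro σ hσ
    apply Nat.Partition.ext
    rw [move_parts, move_parts, add_tsub_cancel_right,
      tsub_add_cancel_of_le (Multiset.le_count_iff_replicate_le.mp (Finset.mem_filter.mp hσ).2)]

lemma cExp_eq {r n : ℕ} (hr : 2 ≤ r) :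
    cExp r n = ∑ j ∈ (Icc 1 n).filter (fun j => ¬ r ∣ j),
      ∑ k ∈ range (n + 1), k * W r (r ^ k * j) n := by
  unfold cExp
  have inner : ∀ j : ℕ, (∑' k : ℕ, if ¬ r ∣ j then k * W r (r ^ k * j) n else 0)
      = ∑ k ∈ range (n + 1), if ¬ r ∣ j then k * W r (r ^ k * j) n else 0 := by
    intro j
    apply tsum_eq_sum
    intro k hk
    rw [Finset.mem_range, not_lt] at hk
    by_cases hd : r ∣ j
    · simp [hd]
    · have hj1 : 1 ≤ j := by
        rcases Nat.eq_zero_or_pos j with h | h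
        · exact absurd (h ▸ dvd_zero r) hd
        · exact h
      have : n < r ^ k * j := by
        have h1 : k < 2 ^ k := Nat.lt_two_pow_self
        have h2 : 2 ^ k ≤ r ^ k := Nat.pow_le_pow_left hr k
        have h3 : r ^ k ≤ r ^ k * j := Nat.le_mul_of_pos_right _ hj1
        omega
      simp [hd, W_eq_zero this]
  rw [tsum_congr inner]
  rw [tsum_eq_sum (s := (Icc 1 n).filter (fun j => ¬ r ∣ j)) ?_]
  · apply Finset.sum_congr rfl
    intro j hj
    rw [Finset.mem_filter] at hj
    exact Finset.sum_congr rfl (fun k _ => if_pos hj.2)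
  · intro j hj
    apply Finset.sum_eq_zero
    intro k _
    by_cases hd : r ∣ j
    · simp [hd]
    · rw [if_pos hd]
      have hj1 : 1 ≤ j := by
        rcases Nat.eq_zero_or_pos j with h | h
        · exact absurd (h ▸ dvd_zero r) hd
        · exact h
      have hjn : n < j := by
        by_contra hle
        exact hj (Finset.mem_filter.mpr ⟨Finset.mem_Icc.mpr ⟨hj1, not_lt.mp hle⟩, hd⟩)
      have : n < r ^ k * j := lt_of_lt_of_le hjn (Nat.le_mul_of_pos_left _ (pow_pos (by omega) k))
      rw [W_eq_zero this, mul_zero]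

lemma factorial_prod {n : ℕ} (ρ : n.Partition) :
    ∏ i ∈ ρ.parts.toFinset, (ρ.parts.count i)! = ∏ j ∈ Icc 1 n, j ^ numGE ρ j := by
  have step1 : ∀ j ∈ Icc 1 n, j ^ numGE ρ j
      = ∏ i ∈ Icc 1 n, if j ≤ ρ.parts.count i then j else 1 := by
    intro j hj
    rw [numGE_eq ρ (Finset.mem_Icc.mp hj).1, ← Finset.prod_const, Finset.prod_filter]
  rw [Finset.prod_congr rfl step1, Finset.prod_comm]
  have step2 : ∀ i ∈ Icc 1 n, (∏ j ∈ Icc 1 n, if j ≤ ρ.parts.count i then j else 1)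
      = (ρ.parts.count i)! := by
    intro i _
    rw [← Finset.prod_filter]
    have : (Icc 1 n).filter (fun j => j ≤ ρ.parts.count i) = Icc 1 (ρ.parts.count i) := by
      ext j
      simp only [Finset.mem_filter, Finset.mem_Icc]
      have := count_le_n ρ i
      omega
    rw [this, ← Finset.Ico_add_one_right_eq_Icc, Finset.prod_Ico_id_eq_factorial]
  rw [Finset.prod_congr rfl step2]
  apply Finset.prod_subset
  · intro i hi
    rw [Multiset.mem_toFinset] at hi
    exact Finset.mem_Icc.mpr ⟨ρ.parts_pos hi, part_le_n ρ hi⟩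
  · intro i _ hi
    rw [Multiset.mem_toFinset] at hi
    rw [Multiset.count_eq_zero_of_notMem hi]
    rfl

lemma parts_prod_eq {n : ℕ} (ρ : n.Partition) :
    ρ.parts.prod = ∏ i ∈ Icc 1 n, i ^ ρ.parts.count i := by
  rw [Finset.prod_multiset_count]
  apply Finset.prod_subset
  · intro i hi
    rw [Multiset.mem_toFinset] at hi
    exact Finset.mem_Icc.mpr ⟨ρ.parts_pos hi, part_le_n ρ hi⟩
  · intro i _ hi
    rw [Multiset.mem_toFinset] at hi
    rw [Multiset.count_eq_zero_of_notMem hi, pow_zero]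

set_option maxHeartbeats 2000000 in
theorem prod_factorials_eq (r n : ℕ) (hr : 2 ≤ r) :
    (∏ ρ ∈ CP r n, ∏ i ∈ ρ.parts.toFinset, (ρ.parts.count i)!) =
    r ^ cExp r n * ∏ ρ ∈ CP r n, ρ.parts.prod := by
  have hrpos : 0 < r := by omega
  set D : Finset ℕ := Icc 1 n with hD
  set D' : Finset ℕ := D.filter (fun j => ¬ r ∣ j) with hD'
  set K : Finset ℕ := range (n + 1) with hK
  have hD'mem : ∀ j ∈ D', 1 ≤ j ∧ ¬ r ∣ j := by
    intro j hj
    rw [hD', Finset.mem_filter, hD, Finset.mem_Icc] at hj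
    exact ⟨hj.1.1, hj.2⟩
  have hpow_pos : ∀ (k : ℕ), ∀ j ∈ D', 1 ≤ r ^ k * j :=
    fun k j hj => Nat.mul_pos (pow_pos hrpos k) (hD'mem j hj).1
  -- Step 1 : LHS as a product over thresholds
  have step1 : (∏ ρ ∈ CP r n, ∏ i ∈ ρ.parts.toFinset, (ρ.parts.count i)!)
      = ∏ j ∈ D, j ^ W r j n := by
    calc (∏ ρ ∈ CP r n, ∏ i ∈ ρ.parts.toFinset, (ρ.parts.count i)!)
        = ∏ ρ ∈ CP r n, ∏ j ∈ D, j ^ numGE ρ j :=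
          Finset.prod_congr rfl (fun ρ _ => factorial_prod ρ)
      _ = ∏ j ∈ D, ∏ ρ ∈ CP r n, j ^ numGE ρ j := Finset.prod_comm
      _ = ∏ j ∈ D, j ^ W r j n :=
          Finset.prod_congr rfl (fun j _ => Finset.prod_pow_eq_pow_sum _ _ _)
  -- Step 2 : RHS parts-product in terms of A
  have count_sum : ∀ i : ℕ, (∑ ρ ∈ CP r n, ρ.parts.count i) = ∑ j ∈ D, A r n i j := by
    intro i
    have h1 : ∀ ρ ∈ CP r n, ρ.parts.count i
        = ∑ j ∈ D, if j ≤ ρ.parts.count i then 1 else 0 := by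
      intro ρ _
      rw [← Finset.card_filter]
      have : D.filter (fun j => j ≤ ρ.parts.count i) = Icc 1 (ρ.parts.count i) := by
        ext j
        rw [hD]
        simp only [Finset.mem_filter, Finset.mem_Icc]
        have := count_le_n ρ i
        omega
      rw [this, Nat.card_Icc]
      omega
    rw [Finset.sum_congr rfl h1, Finset.sum_comm]
    exact Finset.sum_congr rfl (fun j _ => (Finset.card_filter _ _).symm)
  have step2 : (∏ ρ ∈ CP r n, ρ.parts.prod) = ∏ i ∈ D, i ^ (∑ j ∈ D, A r n i j) := by
    calc (∏ ρ ∈ CP r n, ρ.parts.prod)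
        = ∏ ρ ∈ CP r n, ∏ i ∈ D, i ^ ρ.parts.count i :=
          Finset.prod_congr rfl (fun ρ _ => parts_prod_eq ρ)
      _ = ∏ i ∈ D, ∏ ρ ∈ CP r n, i ^ ρ.parts.count i := Finset.prod_comm
      _ = ∏ i ∈ D, i ^ (∑ ρ ∈ CP r n, ρ.parts.count i) :=
          Finset.prod_congr rfl (fun i _ => Finset.prod_pow_eq_pow_sum _ _ _)
      _ = ∏ i ∈ D, i ^ (∑ j ∈ D, A r n i j) := by
          exact Finset.prod_congr rfl (fun i _ => by rw [count_sum i])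
  -- Step 3 : reindex the LHS product
  have step3 : (∏ j ∈ D, j ^ W r j n)
      = ∏ j' ∈ D', ∏ k ∈ K, (r ^ k * j') ^ W r (r ^ k * j') n := by
    apply prod_reindex r n hr
    intro j _ hnj
    rw [W_eq_zero hnj, pow_zero]
  -- split each factor
  have step4 : (∏ j' ∈ D', ∏ k ∈ K, (r ^ k * j') ^ W r (r ^ k * j') n)
      = (r ^ ∑ j' ∈ D', ∑ k ∈ K, k * W r (r ^ k * j') n) *
        ∏ j' ∈ D', ∏ k ∈ K, j' ^ W r (r ^ k * j') n := by
    have h1 : ∀ j' ∈ D', ∀ k ∈ K, (r ^ k * j') ^ W r (r ^ k * j') n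
        = r ^ (k * W r (r ^ k * j') n) * j' ^ W r (r ^ k * j') n := by
      intro j' _ k _
      rw [mul_pow, ← pow_mul]
    calc (∏ j' ∈ D', ∏ k ∈ K, (r ^ k * j') ^ W r (r ^ k * j') n)
        = ∏ j' ∈ D', ∏ k ∈ K,
            (r ^ (k * W r (r ^ k * j') n) * j' ^ W r (r ^ k * j') n) := by
          exact Finset.prod_congr rfl (fun j' hj' =>
            Finset.prod_congr rfl (fun k hk => h1 j' hj' k hk))
      _ = (∏ j' ∈ D', ∏ k ∈ K, r ^ (k * W r (r ^ k * j') n)) *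
          ∏ j' ∈ D', ∏ k ∈ K, j' ^ W r (r ^ k * j') n := by
          rw [← Finset.prod_mul_distrib]
          exact Finset.prod_congr rfl (fun j' _ => Finset.prod_mul_distrib)
      _ = (r ^ ∑ j' ∈ D', ∑ k ∈ K, k * W r (r ^ k * j') n) *
          ∏ j' ∈ D', ∏ k ∈ K, j' ^ W r (r ^ k * j') n := by
          congr 1
          rw [← Finset.prod_pow_eq_pow_sum]
          exact Finset.prod_congr rfl (fun j' _ => Finset.prod_pow_eq_pow_sum _ _ _)
  -- Step 5 : identify Q with the parts product
  have step5 : (∏ j' ∈ D', ∏ k ∈ K, j' ^ W r (r ^ k * j') n)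
      = ∏ i ∈ D, i ^ (∑ j ∈ D, A r n i j) := by
    have h1 : ∀ j' ∈ D', ∀ k ∈ K, j' ^ W r (r ^ k * j') n
        = ∏ i ∈ D', j' ^ A r n j' (r ^ k * i) := by
      intro j' hj' k _
      rw [W_eq_sum (hpow_pos k j' hj')]
      rw [← Finset.prod_pow_eq_pow_sum]
      have hsub : (∏ i ∈ D, j' ^ A r n i (r ^ k * j'))
          = ∏ i ∈ D', j' ^ A r n i (r ^ k * j') := by
        symm
        apply Finset.prod_subset (Finset.filter_subset _ _)
        intro i hi hni
        have hdvd : r ∣ i := by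
          by_contra hc
          exact hni (Finset.mem_filter.mpr ⟨hi, hc⟩)
        rw [A_eq_zero_of_dvd hdvd (hpow_pos k j' hj'), pow_zero]
      rw [hsub]
      apply Finset.prod_congr rfl
      intro i hi
      congr 1
      exact A_symm hr (hD'mem i hi).2 (hD'mem j' hj').2 (by ring)
    calc (∏ j' ∈ D', ∏ k ∈ K, j' ^ W r (r ^ k * j') n)
        = ∏ j' ∈ D', ∏ k ∈ K, ∏ i ∈ D', j' ^ A r n j' (r ^ k * i) := by
          exact Finset.prod_congr rfl (fun j' hj' =>
            Finset.prod_congr rfl (fun k hk => h1 j' hj' k hk))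
      _ = ∏ j' ∈ D', ∏ i ∈ D', ∏ k ∈ K, j' ^ A r n j' (r ^ k * i) :=
          Finset.prod_congr rfl (fun j' _ => Finset.prod_comm)
      _ = ∏ j' ∈ D', ∏ m ∈ D, j' ^ A r n j' m := by
          apply Finset.prod_congr rfl
          intro j' _
          symm
          apply prod_reindex r n hr
          intro m _ hm
          rw [A_eq_zero_of_gt hm, pow_zero]
      _ = ∏ j' ∈ D', j' ^ (∑ m ∈ D, A r n j' m) :=
          Finset.prod_congr rfl (fun j' _ => Finset.prod_pow_eq_pow_sum _ _ _)
      _ = ∏ i ∈ D, i ^ (∑ j ∈ D, A r n i j) := by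
          apply Finset.prod_subset (Finset.filter_subset _ _)
          intro i hi hni
          have hdvd : r ∣ i := by
            by_contra hc
            exact hni (Finset.mem_filter.mpr ⟨hi, hc⟩)
          have : (∑ j ∈ D, A r n i j) = 0 := by
            apply Finset.sum_eq_zero
            intro j hj
            rw [hD, Finset.mem_Icc] at hj
            exact A_eq_zero_of_dvd hdvd hj.1
          rw [this, pow_zero]
  rw [step1, step3, step4, step5, ← step2, cExp_eq hr]
end

section
/- For pairwise coprime integers r_1, ..., r_m ≥ 2 and any tuple j = (j_1,...,j_m) not all with j_i ≡ 0, the product over (r_1,...,r_m)-class regular partitions ρ of n of Π_i m_i(ρ)! equals Π_{i=1}^m r_i^{c_{r_i,n}} times the product over such partitions of the product of all parts, where c_{r_i,n} = Σ_{j not divisible by any r_l} Σ_{k_1,...,k_m ≥ 0} k_i · W_{r, r_1^{k_1}···r_m^{k_m} j, n}. -/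
open Nat Finset
open scoped Classical

/-- `c_{r_i,n} = Σ_{j not divisible by any r_l} Σ_{k_1,…,k_m ≥ 0} k_i · W_{r, r^k j, n}`. -/
noncomputable def cExpm (m : ℕ) (r : Fin m → ℕ) (i : Fin m) (n : ℕ) : ℕ :=
  ∑' j : ℕ, ∑' k : Fin m → ℕ,
    if ∀ l, ¬ r l ∣ j then k i * Wm m r ((∏ l, r l ^ k l) * j) n else 0

section Aux

variable (m : ℕ) (r : Fin m → ℕ) (n : ℕ)

/-- total multiplicity of the part `j` over all class regular partitions of `n` -/
noncomputable def Mcount (j : ℕ) : ℕ := ∑ ρ ∈ CPm m r n, ρ.parts.count j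

noncomputable def boxk : Finset (Fin m → ℕ) := Fintype.piFinset fun _ => range (n+1)

noncomputable def Afree : Finset ℕ := (Icc 1 n).filter (fun j => ∀ l, ¬ r l ∣ j)

noncomputable def compk (p : ℕ × (Fin m → ℕ)) : ℕ := (∏ l, r l ^ p.2 l) * p.1

variable {m r n}

lemma mem_CPm {ρ : n.Partition} : ρ ∈ CPm m r n ↔ ∀ p ∈ ρ.parts, ∀ i, ¬ r i ∣ p := by
  simp [CPm]

lemma part_one_le {ρ : n.Partition} {i : ℕ} (h : i ∈ ρ.parts) : 1 ≤ i := ρ.parts_pos h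

lemma part_le {ρ : n.Partition} {i : ℕ} (h : i ∈ ρ.parts) : i ≤ n := by
  rw [← ρ.parts_sum]
  exact Multiset.single_le_sum (fun x _ => Nat.zero_le x) _ h

lemma count_le (ρ : n.Partition) (i : ℕ) : ρ.parts.count i ≤ n := by
  calc ρ.parts.count i ≤ Multiset.card ρ.parts := Multiset.count_le_card _ _
  _ = (ρ.parts.map (fun _ => 1)).sum := by simp
  _ ≤ (ρ.parts.map id).sum := Multiset.sum_map_le_sum_map _ _ (fun x hx => ρ.parts_pos hx)
  _ = n := by simp [ρ.parts_sum]

lemma factprod_eq (ρ : n.Partition) :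
    ∏ i ∈ ρ.parts.toFinset, (ρ.parts.count i)! = ∏ u ∈ Icc 1 n, u ^ numGE ρ u := by
  have h1 : ∀ i ∈ ρ.parts.toFinset,
      (ρ.parts.count i)! = ∏ u ∈ Icc 1 n, if u ≤ ρ.parts.count i then u else 1 := by
    intro i _
    rw [← Finset.prod_filter]
    have h2 : (Icc 1 n).filter (fun u => u ≤ ρ.parts.count i) = Icc 1 (ρ.parts.count i) := by
      ext u
      simp only [mem_filter, mem_Icc]
      exact ⟨fun ⟨⟨a, _⟩, c⟩ => ⟨a, c⟩, fun ⟨a, b⟩ => ⟨⟨a, b.trans (count_le ρ i)⟩, b⟩⟩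
    rw [h2, ← Finset.Ico_add_one_right_eq_Icc, Finset.prod_Ico_id_eq_factorial]
  rw [Finset.prod_congr rfl h1, Finset.prod_comm]
  refine Finset.prod_congr rfl fun u _ => ?_
  rw [← Finset.prod_filter, Finset.prod_const, numGE]

lemma b_eq : (∏ ρ ∈ CPm m r n, ∏ i ∈ ρ.parts.toFinset, (ρ.parts.count i)!) =
    ∏ u ∈ Icc 1 n, u ^ Wm m r u n := by
  simp_rw [fun ρ => factprod_eq (n := n) ρ]
  rw [Finset.prod_comm]
  exact Finset.prod_congr rfl fun u _ => Finset.prod_pow_eq_pow_sum _ _ _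

lemma a_eq : (∏ ρ ∈ CPm m r n, ρ.parts.prod) = ∏ u ∈ Icc 1 n, u ^ Mcount m r n u := by
  have h1 : ∀ ρ ∈ CPm m r n, ρ.parts.prod = ∏ u ∈ Icc 1 n, u ^ ρ.parts.count u := by
    intro ρ _
    rw [Finset.prod_multiset_count]
    refine Finset.prod_subset (fun i hi => ?_) (fun i _ hi => ?_)
    · rw [Multiset.mem_toFinset] at hi
      exact Finset.mem_Icc.mpr ⟨part_one_le hi, part_le hi⟩
    · rw [Multiset.mem_toFinset] at hi
      rw [Multiset.count_eq_zero_of_notMem hi, pow_zero]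
  rw [Finset.prod_congr rfl h1, Finset.prod_comm]
  exact Finset.prod_congr rfl fun u _ => Finset.prod_pow_eq_pow_sum _ _ _

/-- the removal/addition bijection -/
lemma card_count_ge {i u : ℕ} (hi : 1 ≤ i) (hu : 1 ≤ u) :
    ((CPm m r n).filter (fun ρ => u ≤ ρ.parts.count i)).card =
      if (∀ l, ¬ r l ∣ i) ∧ i * u ≤ n then (CPm m r (n - i * u)).card else 0 := by
  have sum_rep : (Multiset.replicate u i).sum = u * i := by
    rw [Multiset.sum_replicate, smul_eq_mul]
  rcases Classical.em ((∀ l, ¬ r l ∣ i) ∧ i * u ≤ n) with h | h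
  · rw [if_pos h]
    obtain ⟨hall, hiu⟩ := h
    have key : ∀ ρ : n.Partition, ρ ∈ (CPm m r n).filter (fun ρ => u ≤ ρ.parts.count i) →
        Multiset.replicate u i ≤ ρ.parts := by
      intro ρ hρ
      exact Multiset.le_count_iff_replicate_le.mp (Finset.mem_filter.mp hρ).2
    refine Finset.card_bij'
      (fun ρ hρ => ⟨ρ.parts - Multiset.replicate u i, fun hp => ρ.parts_pos
        (Multiset.mem_of_le tsub_le_self hp), ?_⟩)
      (fun σ _ => ⟨σ.parts + Multiset.replicate u i, fun hp => ?_, ?_⟩) ?_ ?_ ?_ ?_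
    · -- sum for forward map
      have h2 := congrArg Multiset.sum (tsub_add_cancel_of_le (key _ hρ))
      rw [Multiset.sum_add, sum_rep, ρ.parts_sum] at h2
      rw [mul_comm] at hiu ⊢
      omega
    · -- positivity for backward map
      rcases Multiset.mem_add.mp hp with hp | hp
      · exact σ.parts_pos hp
      · rw [Multiset.eq_of_mem_replicate hp]; omega
    · -- sum for backward map
      rw [Multiset.sum_add, sum_rep, σ.parts_sum, mul_comm] at *
      omega
    · -- forward map lands in target
      intro ρ hρ
      rw [mem_CPm]
      intro p hp
      exact mem_CPm.mp (Finset.mem_filter.mp hρ).1 p (Multiset.mem_of_le tsub_le_self hp)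
    · -- backward map lands in source
      intro σ hσ
      rw [Finset.mem_filter]
      constructor
      · rw [mem_CPm]
        intro p hp
        rcases Multiset.mem_add.mp hp with hp | hp
        · exact mem_CPm.mp hσ p hp
        · rw [Multiset.eq_of_mem_replicate hp]; exact hall
      · simp only [Multiset.count_add, Multiset.count_replicate_self]
        omega
    · intro ρ hρ
      apply Nat.Partition.ext
      exact tsub_add_cancel_of_le (key _ hρ)
    · intro σ _
      apply Nat.Partition.ext
      exact add_tsub_cancel_right _ _
  · rw [if_neg h]
    rw [Finset.card_eq_zero, Finset.filter_eq_empty_iff]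
    intro ρ hρ hcount
    have hrep : Multiset.replicate u i ≤ ρ.parts := Multiset.le_count_iff_replicate_le.mp hcount
    by_cases hall : ∀ l, ¬ r l ∣ i
    · have hsum : u * i ≤ n := by
        rw [← sum_rep, ← ρ.parts_sum]
        obtain ⟨v, hv⟩ := Multiset.le_iff_exists_add.mp hrep
        rw [hv, Multiset.sum_add]
        omega
      rw [mul_comm] at hsum
      exact h ⟨hall, hsum⟩
    · have hin : i ∈ ρ.parts := by
        rw [← Multiset.count_pos]
        omega
      exact hall (mem_CPm.mp hρ i hin)

lemma Wm_eq_sum {u : ℕ} (hu : 1 ≤ u) :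
    Wm m r u n = ∑ i ∈ Icc 1 n, ((CPm m r n).filter (fun ρ => u ≤ ρ.parts.count i)).card := by
  have h1 : ∀ ρ ∈ CPm m r n, numGE ρ u =
      ∑ i ∈ Icc 1 n, if u ≤ ρ.parts.count i then 1 else 0 := by
    intro ρ _
    rw [numGE, ← Finset.card_filter]
    congr 1
    ext i
    simp only [mem_filter, Multiset.mem_toFinset, mem_Icc]
    refine ⟨fun ⟨hi, hc⟩ => ⟨⟨part_one_le hi, part_le hi⟩, hc⟩, fun ⟨_, hc⟩ => ⟨?_, hc⟩⟩
    rw [← Multiset.count_pos]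
    omega
  rw [Wm, Finset.sum_congr rfl h1, Finset.sum_comm]
  exact Finset.sum_congr rfl fun i _ => (Finset.card_filter _ _).symm

lemma Wm_eq_zero {u : ℕ} (hu : n < u) : Wm m r u n = 0 := by
  rw [Wm]
  refine Finset.sum_eq_zero fun ρ _ => ?_
  rw [numGE, Finset.card_eq_zero, Finset.filter_eq_empty_iff]
  intro i _
  have := count_le ρ i
  omega

lemma Mcount_eq_sum (j : ℕ) :
    Mcount m r n j = ∑ t ∈ Icc 1 n, ((CPm m r n).filter (fun ρ => t ≤ ρ.parts.count j)).card := by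
  have h1 : ∀ ρ ∈ CPm m r n, ρ.parts.count j =
      ∑ t ∈ Icc 1 n, if t ≤ ρ.parts.count j then 1 else 0 := by
    intro ρ _
    rw [← Finset.card_filter]
    have h2 : (Icc 1 n).filter (fun t => t ≤ ρ.parts.count j) = Icc 1 (ρ.parts.count j) := by
      ext t
      simp only [mem_filter, mem_Icc]
      exact ⟨fun ⟨⟨a, _⟩, c⟩ => ⟨a, c⟩, fun ⟨a, b⟩ => ⟨⟨a, b.trans (count_le ρ j)⟩, b⟩⟩
    rw [h2, Nat.card_Icc]; omega
  rw [Mcount, Finset.sum_congr rfl h1, Finset.sum_comm]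
  exact Finset.sum_congr rfl fun t _ => (Finset.card_filter _ _).symm

lemma Mcount_eq_zero {j : ℕ} (hj : ¬ ∀ l, ¬ r l ∣ j) : Mcount m r n j = 0 := by
  refine Finset.sum_eq_zero fun ρ hρ => ?_
  rw [Multiset.count_eq_zero]
  intro hjm
  exact hj (mem_CPm.mp hρ j hjm)

variable (hr : ∀ i, 2 ≤ r i) (hcop : ∀ i j, i ≠ j → Nat.Coprime (r i) (r j))
include hr

lemma decomp_exists (u : ℕ) (hu : 1 ≤ u) :
    ∃ (j : ℕ) (k : Fin m → ℕ), (∀ l, ¬ r l ∣ j) ∧ 1 ≤ j ∧ u = (∏ l, r l ^ k l) * j := by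
  induction u using Nat.strong_induction_on with
  | _ u IH =>
    by_cases hdvd : ∃ l, r l ∣ u
    · obtain ⟨l, v, huv⟩ := hdvd
      have hv1 : 1 ≤ v := by
        rcases Nat.eq_zero_or_pos v with h0 | h0
        · subst h0; simp at huv; omega
        · exact h0
      have hvlt : v < u := by
        have h2 := hr l
        nlinarith
      obtain ⟨j, k, hj, hj1, hveq⟩ := IH v hvlt hv1
      refine ⟨j, Function.update k l (k l + 1), hj, hj1, ?_⟩
      have h3 : ∏ l', r l' ^ Function.update k l (k l + 1) l' =
          r l ^ (k l + 1) * ∏ l' ∈ Finset.univ.erase l, r l' ^ k l' := by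
        rw [← Finset.mul_prod_erase _ _ (Finset.mem_univ l), Function.update_self]
        congr 1
        exact Finset.prod_congr rfl fun x hx =>
          by rw [Function.update_of_ne (Finset.mem_erase.mp hx).1]
      have h4 : (∏ l', r l' ^ k l') = r l ^ k l * ∏ l' ∈ Finset.univ.erase l, r l' ^ k l' :=
        (Finset.mul_prod_erase _ _ (Finset.mem_univ l)).symm
      rw [huv, hveq, h3, h4, pow_succ]
      ring
    · push_neg at hdvd
      exact ⟨u, 0, hdvd, hu, by simp⟩

include hcop in
lemma decomp_unique {j j' : ℕ} {k k' : Fin m → ℕ}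
    (hj : ∀ l, ¬ r l ∣ j) (hj1 : 1 ≤ j) (hj' : ∀ l, ¬ r l ∣ j') (hj1' : 1 ≤ j')
    (h : (∏ l, r l ^ k l) * j = (∏ l, r l ^ k' l) * j') : j = j' ∧ k = k' := by
  have helper : ∀ (a a' : ℕ) (e e' : Fin m → ℕ), (∀ l, ¬ r l ∣ a) →
      (∏ l, r l ^ e l) * a = (∏ l, r l ^ e' l) * a' →
      ∀ l, ¬ e l < e' l := by
    intro a a' e e' ha heq l hlt
    have h4 : (∏ l', r l' ^ e l') = r l ^ e l * ∏ l' ∈ Finset.univ.erase l, r l' ^ e l' :=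
      (Finset.mul_prod_erase _ _ (Finset.mem_univ l)).symm
    have h5 : (∏ l', r l' ^ e' l') = r l ^ e' l * ∏ l' ∈ Finset.univ.erase l, r l' ^ e' l' :=
      (Finset.mul_prod_erase _ _ (Finset.mem_univ l)).symm
    set C := ∏ l' ∈ Finset.univ.erase l, r l' ^ e l' with hC
    set C' := ∏ l' ∈ Finset.univ.erase l, r l' ^ e' l' with hC'
    have hre : r l ^ e' l = r l ^ e l * r l ^ (e' l - e l) := by
      rw [← pow_add]
      congr 1
      omega
    rw [h4, h5, hre] at heq
    have hpos : 0 < r l ^ e l := Nat.pow_pos (by have := hr l; omega)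
    have heq2 : C * a = r l ^ (e' l - e l) * (C' * a') := by
      have := Nat.eq_of_mul_eq_mul_left hpos (by linarith [heq] <;> ring_nf
        : r l ^ e l * (C * a) = r l ^ e l * (r l ^ (e' l - e l) * (C' * a')))
      exact this
    have hdvd : r l ∣ C * a := by
      rw [heq2]
      have : r l ∣ r l ^ (e' l - e l) := dvd_pow_self _ (by omega)
      exact this.mul_right _
    have hcopC : Nat.Coprime (r l) C := by
      rw [hC]
      apply Nat.Coprime.prod_right
      intro l' hl'
      have hne : l ≠ l' := fun hcon => (Finset.mem_erase.mp hl').1 hcon.symm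
      exact (hcop l l' hne).pow_right _
    have : r l ∣ a := hcopC.dvd_of_dvd_mul_left hdvd
    exact ha l this
  have hk : k = k' := by
    funext l
    rcases Nat.lt_trichotomy (k l) (k' l) with hlt | heq | hgt
    · exact absurd hlt (helper j j' k k' hj h l)
    · exact heq
    · exact absurd hgt (helper j' j k' k hj' h.symm l)
  subst hk
  have hpos : 0 < ∏ l, r l ^ k l :=
    Finset.prod_pos fun l _ => Nat.pow_pos (by have := hr l; omega)
  exact ⟨Nat.eq_of_mul_eq_mul_left hpos h, rfl⟩

include hcop in
lemma image_comp_eq :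
    ((Afree m r n ×ˢ boxk m n).filter (fun p => compk m r p ≤ n)).image (compk m r) =
      Icc 1 n := by
  ext u
  simp only [Finset.mem_image, Finset.mem_filter]
  simp only [Finset.mem_image, Finset.mem_filter, Finset.mem_product, Afree, boxk, compk,
    Finset.mem_Icc, Fintype.mem_piFinset, Finset.mem_range]
  constructor
  · rintro ⟨⟨j, k⟩, ⟨⟨⟨⟨hj1, _⟩, _⟩, _⟩, hle⟩, rfl⟩
    refine ⟨?_, hle⟩
    have hpos : 0 < ∏ l, r l ^ k l :=
      Finset.prod_pos fun l _ => Nat.pow_pos (by have := hr l; omega)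
    exact Nat.one_le_iff_ne_zero.mpr (by positivity)
  · rintro ⟨hu1, hun⟩
    obtain ⟨j, k, hall, hj1, hjk⟩ := decomp_exists hr u hu1
    have hjd : j ∣ u := ⟨_, by rw [hjk, mul_comm]⟩
    have hju : j ≤ u := Nat.le_of_dvd (by omega) hjd
    refine ⟨⟨j, k⟩, ⟨⟨⟨⟨hj1, hju.trans hun⟩, hall⟩, fun l => ?_⟩,
      show (∏ l', r l' ^ k l') * j ≤ n by omega⟩, hjk.symm⟩
    show k l < n + 1
    have h1 : r l ^ k l ∣ u := by
      have h2 : r l ^ k l ∣ ∏ l', r l' ^ k l' :=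
        Finset.dvd_prod_of_mem (fun l' => r l' ^ k l') (Finset.mem_univ l)
      exact h2.trans ⟨j, hjk⟩
    have h3 : r l ^ k l ≤ n := (Nat.le_of_dvd (by omega) h1).trans hun
    have h4 : 2 ^ k l ≤ r l ^ k l := Nat.pow_le_pow_left (hr l) _
    have h5 : k l < 2 ^ k l := Nat.lt_two_pow_self
    omega

include hcop in
lemma prod_decomp {M : Type*} [CommMonoid M] (f : ℕ → M) (hf : ∀ v, n < v → f v = 1) :
    ∏ u ∈ Icc 1 n, f u = ∏ p ∈ Afree m r n ×ˢ boxk m n, f (compk m r p) := by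
  rw [← image_comp_eq hr hcop, Finset.prod_image ?inj]
  case inj =>
    rintro ⟨j, k⟩ hx ⟨j', k'⟩ hy hcomp
    simp only [Finset.mem_coe, Finset.mem_filter] at hx hy
    simp only [Finset.mem_filter, Finset.mem_product, Afree, Finset.mem_Icc,
      Finset.mem_filter] at hx hy
    obtain ⟨heq1, heq2⟩ := decomp_unique hr hcop hx.1.1.2 hx.1.1.1.1 hy.1.1.2 hy.1.1.1.1 hcomp
    exact Prod.ext heq1 heq2
  apply Finset.prod_subset (Finset.filter_subset _ _)
  intro p _ hp
  rw [Finset.mem_filter] at hp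
  push_neg at hp
  rcases Classical.em (p ∈ Afree m r n ×ˢ boxk m n) with hmem | hmem
  · exact hf _ (hp hmem)
  · exact absurd ‹_› hmem

include hcop in
lemma sum_decomp (f : ℕ → ℕ) (hf : ∀ v, n < v → f v = 0) :
    ∑ u ∈ Icc 1 n, f u = ∑ p ∈ Afree m r n ×ˢ boxk m n, f (compk m r p) := by
  rw [← image_comp_eq hr hcop, Finset.sum_image ?inj]
  case inj =>
    rintro ⟨j, k⟩ hx ⟨j', k'⟩ hy hcomp
    simp only [Finset.mem_coe, Finset.mem_filter] at hx hy
    simp only [Finset.mem_filter, Finset.mem_product, Afree, Finset.mem_Icc,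
      Finset.mem_filter] at hx hy
    obtain ⟨heq1, heq2⟩ := decomp_unique hr hcop hx.1.1.2 hx.1.1.1.1 hy.1.1.2 hy.1.1.1.1 hcomp
    exact Prod.ext heq1 heq2
  apply Finset.sum_subset (Finset.filter_subset _ _)
  intro p hmem hp
  rw [Finset.mem_filter] at hp
  push_neg at hp
  exact hf _ (hp hmem)

include hcop in
lemma core_identity {j : ℕ} (hj : j ∈ Afree m r n) :
    ∑ k ∈ boxk m n, Wm m r ((∏ l, r l ^ k l) * j) n = Mcount m r n j := by
  have hj' := hj
  simp only [Afree, Finset.mem_filter, Finset.mem_Icc] at hj'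
  obtain ⟨⟨hj1, hjn⟩, hall⟩ := hj'
  have hPpos : ∀ k : Fin m → ℕ, 0 < ∏ l, r l ^ k l := fun k =>
    Finset.prod_pos fun l _ => Nat.pow_pos (by have := hr l; omega)
  have hg0 : ∀ t, n < t → (if t * j ≤ n then (CPm m r (n - t * j)).card else 0) = 0 := by
    intro t ht
    rw [if_neg]
    nlinarith
  have step1 : ∀ k : Fin m → ℕ, Wm m r ((∏ l, r l ^ k l) * j) n =
      ∑ i ∈ Afree m r n,
        (if ((∏ l, r l ^ k l) * i) * j ≤ n
          then (CPm m r (n - ((∏ l, r l ^ k l) * i) * j)).card else 0) := by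
    intro k
    have hu1 : 1 ≤ (∏ l, r l ^ k l) * j := Nat.mul_le_mul (hPpos k) hj1
    rw [Wm_eq_sum hu1, Afree, Finset.sum_filter]
    refine Finset.sum_congr rfl fun i hi => ?_
    rw [card_count_ge (Finset.mem_Icc.mp hi).1 hu1]
    have harr : i * ((∏ l, r l ^ k l) * j) = ((∏ l, r l ^ k l) * i) * j := by ring
    rw [harr, ite_and]
  rw [Finset.sum_congr rfl fun k _ => step1 k, Finset.sum_comm]
  have step2 : ∑ i ∈ Afree m r n, ∑ k ∈ boxk m n,
      (if ((∏ l, r l ^ k l) * i) * j ≤ n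
        then (CPm m r (n - ((∏ l, r l ^ k l) * i) * j)).card else 0) =
      ∑ p ∈ Afree m r n ×ˢ boxk m n,
        (if compk m r p * j ≤ n then (CPm m r (n - compk m r p * j)).card else 0) := by
    rw [Finset.sum_product]
    rfl
  rw [step2, ← sum_decomp hr hcop _ hg0, Mcount_eq_sum]
  refine Finset.sum_congr rfl fun t ht => ?_
  rw [card_count_ge hj1 (Finset.mem_Icc.mp ht).1, mul_comm j t]
  exact if_congr (by simp [hall]) rfl rfl

lemma cExpm_eq (l : Fin m) :
    cExpm m r l n =
      ∑ p ∈ Afree m r n ×ˢ boxk m n, p.2 l * Wm m r (compk m r p) n := by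
  have hPpos : ∀ k : Fin m → ℕ, 0 < ∏ l', r l' ^ k l' := fun k =>
    Finset.prod_pos fun l' _ => Nat.pow_pos (by have := hr l'; omega)
  have hj0 : ∀ j : ℕ, (∀ l', ¬ r l' ∣ j) → 1 ≤ j := by
    intro j hfree
    rcases Nat.eq_zero_or_pos j with rfl | h
    · exact absurd (dvd_zero _) (hfree l)
    · exact h
  have inner_eq : ∀ j : ℕ, (∑' k : Fin m → ℕ,
      if ∀ l', ¬ r l' ∣ j then k l * Wm m r ((∏ l', r l' ^ k l') * j) n else 0) =
      ∑ k ∈ boxk m n, (if ∀ l', ¬ r l' ∣ j then k l * Wm m r ((∏ l', r l' ^ k l') * j) n else 0) := by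
    intro j
    apply tsum_eq_sum
    intro k hk
    by_cases hfree : ∀ l', ¬ r l' ∣ j
    · rw [if_pos hfree]
      simp only [boxk, Fintype.mem_piFinset, Finset.mem_range, not_forall] at hk
      obtain ⟨l', hl'⟩ := hk
      have h1 : n + 1 ≤ k l' := by omega
      have h2 : r l' ^ k l' ≤ (∏ l'', r l'' ^ k l'') * j :=
        Nat.le_trans (Nat.le_of_dvd (hPpos k)
          (Finset.dvd_prod_of_mem (fun l'' => r l'' ^ k l'') (Finset.mem_univ l')))
          (Nat.le_mul_of_pos_right _ (hj0 j hfree))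
      have h3 : n < r l' ^ k l' := by
        have h4 : 2 ^ k l' ≤ r l' ^ k l' := Nat.pow_le_pow_left (hr l') _
        have h5 : k l' < 2 ^ k l' := Nat.lt_two_pow_self
        omega
      rw [Wm_eq_zero (by omega), Nat.mul_zero]
    · rw [if_neg hfree]
  rw [cExpm, tsum_congr inner_eq, tsum_eq_sum (s := Finset.range (n + 1)) ?_]
  · -- finite double sum
    have step : ∀ j ∈ Finset.range (n + 1),
        (∑ k ∈ boxk m n, if ∀ l', ¬ r l' ∣ j then k l * Wm m r ((∏ l', r l' ^ k l') * j) n else 0)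
        = if ∀ l', ¬ r l' ∣ j then
            (∑ k ∈ boxk m n, k l * Wm m r ((∏ l', r l' ^ k l') * j) n) else 0 := by
      intro j _
      by_cases hfree : ∀ l', ¬ r l' ∣ j
      · simp [hfree]
      · simp [hfree]
    rw [Finset.sum_congr rfl step, ← Finset.sum_filter]
    have hAeq : (Finset.range (n + 1)).filter (fun j => ∀ l', ¬ r l' ∣ j) = Afree m r n := by
      rw [Afree]
      ext j
      simp only [Finset.mem_filter, Finset.mem_range, Finset.mem_Icc]
      constructor
      · rintro ⟨hjr, hfree⟩
        exact ⟨⟨hj0 j hfree, by omega⟩, hfree⟩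
      · rintro ⟨⟨h1, h2⟩, hfree⟩
        exact ⟨by omega, hfree⟩
    rw [hAeq, Finset.sum_product]
    rfl
  · -- outer support
    intro j hj
    rw [Finset.mem_range, not_lt] at hj
    apply Finset.sum_eq_zero
    intro k _
    by_cases hfree : ∀ l', ¬ r l' ∣ j
    · rw [if_pos hfree]
      have h2 : j ≤ (∏ l', r l' ^ k l') * j := Nat.le_mul_of_pos_left _ (hPpos k)
      rw [Wm_eq_zero (by omega), Nat.mul_zero]
    · rw [if_neg hfree]

end Aux

/-- `b_{r,n} = ∏_{i=1}^m r_i^{c_{r_i,n}} · a_{r,n}`. -/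
theorem prod_factorials_eq_multi (m : ℕ) (r : Fin m → ℕ) (hr : ∀ i, 2 ≤ r i)
    (hcop : ∀ i j, i ≠ j → Nat.Coprime (r i) (r j)) (n : ℕ) :
    (∏ ρ ∈ CPm m r n, ∏ i ∈ ρ.parts.toFinset, (ρ.parts.count i)!) =
    (∏ i : Fin m, r i ^ cExpm m r i n) * ∏ ρ ∈ CPm m r n, ρ.parts.prod := by
  have hW1 : ∀ v, n < v → v ^ Wm m r v n = 1 := fun v hv => by rw [Wm_eq_zero hv, pow_zero]
  rw [b_eq, prod_decomp hr hcop (fun u => u ^ Wm m r u n) hW1]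
  have hsplit : ∀ p ∈ Afree m r n ×ˢ boxk m n, compk m r p ^ Wm m r (compk m r p) n =
      (∏ l, r l ^ (p.2 l * Wm m r (compk m r p) n)) * p.1 ^ Wm m r (compk m r p) n := by
    intro p _
    rw [compk, mul_pow]
    congr 1
    rw [← Finset.prod_pow]
    exact Finset.prod_congr rfl fun l _ => (pow_mul _ _ _).symm
  rw [Finset.prod_congr rfl hsplit, Finset.prod_mul_distrib]
  congr 1
  · -- the r-power part
    rw [Finset.prod_comm]
    exact Finset.prod_congr rfl fun l _ => by
      rw [Finset.prod_pow_eq_pow_sum, cExpm_eq hr]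
  · -- the remaining part equals the product of parts
    rw [a_eq, Finset.prod_product]
    have h1 : ∀ j ∈ Afree m r n,
        (∏ k ∈ boxk m n, j ^ Wm m r (compk m r (j, k)) n) = j ^ Mcount m r n j := by
      intro j hj
      rw [Finset.prod_pow_eq_pow_sum]
      congr 1
      exact core_identity hr hcop hj
    rw [Finset.prod_congr rfl h1, Afree, Finset.prod_filter]
    refine Finset.prod_congr rfl fun u _ => ?_
    by_cases hall : ∀ l, ¬ r l ∣ u
    · rw [if_pos hall]
    · rw [if_neg hall, Mcount_eq_zero hall, pow_zero]
end

section
/- For coprime integers r, s ≥ 2, the number of partitions of n with no part divisible by s and each part occurring fewer than r times equals the number of partitions of n with no part divisible by r and each part occurring fewer than s times. -/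
open Nat Finset
open scoped Classical

namespace GlaisherAux

open Multiset

/-- base-`a` valuation of `m` -/
def vpart (a m : ℕ) : ℕ := a.maxPowDiv m

/-- `a`-free part of `m` -/
def upart (a m : ℕ) : ℕ := m / a ^ (a.maxPowDiv m)

lemma decomp (a m : ℕ) : a ^ vpart a m * upart a m = m :=
  Nat.mul_div_cancel' (Nat.maxPowDiv.pow_dvd (p := a) (n := m))

lemma upart_pos {a m : ℕ} (hm : 0 < m) : 0 < upart a m := by
  rcases Nat.eq_zero_or_pos (upart a m) with h | h
  · have := decomp a m; rw [h, mul_zero] at this; omega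
  · exact h

lemma pow_vpart_le {a m : ℕ} (hm : 0 < m) : a ^ vpart a m ≤ m := by
  conv_rhs => rw [← decomp a m]
  exact Nat.le_mul_of_pos_right _ (upart_pos hm)

lemma not_dvd_upart {a m : ℕ} (ha : 2 ≤ a) (hm : 0 < m) : ¬ a ∣ upart a m := by
  rintro ⟨c, hc⟩
  have hdvd : a ^ (vpart a m + 1) ∣ m := by
    refine ⟨c, ?_⟩
    conv_lhs => rw [← decomp a m]
    rw [hc]; ring
  have : vpart a m + 1 ≤ a.maxPowDiv m := (Nat.pow_dvd_iff_le_padicValNat (p := a) (by omega) hm.ne').mp hdvd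
  unfold vpart at this; omega

lemma maxPowDiv_of_not_dvd {a w : ℕ} (hw : ¬ a ∣ w) : a.maxPowDiv w = 0 := by
  by_contra h
  exact hw ((dvd_pow_self a h).trans (Nat.maxPowDiv.pow_dvd (p := a) (n := w)))

lemma vpart_pow_mul {a w : ℕ} (ha : 2 ≤ a) (hw : ¬ a ∣ w) (j : ℕ) :
    vpart a (a ^ j * w) = j := by
  have hwpos : 0 < w := by
    rcases Nat.eq_zero_or_pos w with h | h
    · subst h; simp at hw
    · exact h
  unfold vpart
  rw [show a.maxPowDiv (a ^ j * w) = padicValNat a (a ^ j * w) from rfl,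
    Nat.maxPowDiv.base_pow_mul (by omega) hwpos.ne', show padicValNat a w = 0 from maxPowDiv_of_not_dvd hw]
  omega

lemma upart_pow_mul {a w : ℕ} (ha : 2 ≤ a) (hw : ¬ a ∣ w) (j : ℕ) :
    upart a (a ^ j * w) = w := by
  unfold upart
  rw [show a.maxPowDiv (a ^ j * w) = j from vpart_pow_mul ha hw j]
  exact Nat.mul_div_cancel_left w (pow_pos (by omega) j)

/-! ### The collapse map -/

/-- replace each part `m = a^j * u` by `a^j` copies of `u`. -/
def collapse (a : ℕ) (M : Multiset ℕ) : Multiset ℕ :=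
  M.bind fun m => replicate (a ^ vpart a m) (upart a m)

lemma collapse_sum (a : ℕ) (M : Multiset ℕ) : (collapse a M).sum = M.sum := by
  unfold collapse
  rw [Multiset.sum_bind,
    Multiset.map_congr rfl (fun m _ => by rw [Multiset.sum_replicate, smul_eq_mul, decomp]),
    Multiset.map_id']

lemma mem_collapse {a : ℕ} (ha : 2 ≤ a) {M : Multiset ℕ} {p : ℕ} :
    p ∈ collapse a M ↔ ∃ m ∈ M, p = upart a m := by
  unfold collapse
  simp only [Multiset.mem_bind, Multiset.mem_replicate]
  constructor
  · rintro ⟨m, hm, -, rfl⟩; exact ⟨m, hm, rfl⟩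
  · rintro ⟨m, hm, rfl⟩
    exact ⟨m, hm, by positivity, rfl⟩

lemma indicator_sum {a w m K : ℕ} (ha : 2 ≤ a) (hw : ¬ a ∣ w) (hm : 0 < m)
    (hmK : m < a ^ K) :
    (if upart a m = w then a ^ vpart a m else 0)
      = ∑ j ∈ Finset.range K, (if a ^ j * w = m then 1 else 0) * a ^ j := by
  by_cases h : upart a m = w
  · rw [if_pos h]
    have key : ∀ j ∈ Finset.range K,
        (if a ^ j * w = m then 1 else 0) * a ^ j
          = if j = vpart a m then a ^ j else 0 := by
      intro j _
      by_cases hj : j = vpart a m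
      · subst hj
        rw [if_pos, if_pos rfl, one_mul]
        rw [← h, decomp]
      · have hne : a ^ j * w ≠ m := fun hEq => hj (by rw [← hEq, vpart_pow_mul ha hw])
        rw [if_neg hj, if_neg hne, zero_mul]
    rw [Finset.sum_congr rfl key, Finset.sum_ite_eq' (Finset.range K) (vpart a m)]
    have hvK : vpart a m ∈ Finset.range K := by
      rw [Finset.mem_range, ← Nat.pow_lt_pow_iff_right (by omega : 1 < a)]
      exact lt_of_le_of_lt (pow_vpart_le hm) hmK
    rw [if_pos hvK]
  · rw [if_neg h]
    symm
    apply Finset.sum_eq_zero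
    intro j _
    rw [if_neg, zero_mul]
    intro hEq
    exact h (by rw [← hEq, upart_pow_mul ha hw])

lemma count_collapse {a : ℕ} (ha : 2 ≤ a) {w K : ℕ} (hw : ¬ a ∣ w)
    (M : Multiset ℕ) (hM : ∀ m ∈ M, 0 < m) (hK : ∀ m ∈ M, m < a ^ K) :
    (collapse a M).count w = ∑ j ∈ Finset.range K, M.count (a ^ j * w) * a ^ j := by
  induction M using Multiset.induction_on with
  | empty => simp [collapse]
  | cons m M ih =>
    have hm : 0 < m := hM m (mem_cons_self m M)
    have hmK : m < a ^ K := hK m (mem_cons_self m M)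
    have ih' := ih (fun x hx => hM x (mem_cons_of_mem hx))
      (fun x hx => hK x (mem_cons_of_mem hx))
    unfold collapse at ih' ⊢
    rw [Multiset.cons_bind, Multiset.count_add, Multiset.count_replicate, ih']
    have hcc : ∀ j ∈ Finset.range K,
        ((m ::ₘ M).count (a ^ j * w)) * a ^ j
          = M.count (a ^ j * w) * a ^ j + (if a ^ j * w = m then 1 else 0) * a ^ j := by
      intro j _
      rw [Multiset.count_cons]; ring
    rw [Finset.sum_congr rfl hcc, Finset.sum_add_distrib, ← indicator_sum ha hw hm hmK]
    ring

/-! ### digits helpers -/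

lemma digits_len_le {a N : ℕ} (ha : 2 ≤ a) : (a.digits N).length ≤ N + 1 := by
  rcases Nat.eq_zero_or_pos N with h | h
  · subst h; simp
  · rw [Nat.digits_len a N (by omega) (by omega)]
    have := Nat.log_le_self a N
    omega

lemma sum_getD_mul {a : ℕ} (L : List ℕ) :
    ∀ K, L.length ≤ K →
      ∑ j ∈ Finset.range K, L.getD j 0 * a ^ j = Nat.ofDigits a L := by
  induction L with
  | nil =>
    intro K _
    simp [Nat.ofDigits_nil, List.getD]
  | cons d L ih =>
    intro K hK
    obtain ⟨K', rfl⟩ : ∃ K', K = K' + 1 := by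
      refine ⟨K - 1, ?_⟩
      simp only [List.length_cons] at hK
      omega
    rw [Finset.sum_range_succ']
    simp only [List.getD_cons_succ, List.getD_cons_zero]
    have hstep : ∑ j ∈ Finset.range K', L.getD j 0 * a ^ (j + 1)
        = a * ∑ j ∈ Finset.range K', L.getD j 0 * a ^ j := by
      rw [Finset.mul_sum]
      exact Finset.sum_congr rfl fun j _ => by ring
    rw [hstep, ih K' (by simpa using hK), Nat.ofDigits_cons]
    ring

lemma getD_digits_sum {a : ℕ} (ha : 2 ≤ a) :
    ∀ (K : ℕ) (c : ℕ → ℕ), (∀ j, c j < a) → ∀ i,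
      (a.digits (∑ j ∈ Finset.range K, c j * a ^ j)).getD i 0
        = if i < K then c i else 0 := by
  intro K
  induction K with
  | zero =>
    intro c hc i
    rw [Finset.sum_range_zero, Nat.digits_zero, List.getD_eq_default _ _ (by simp)]
    simp
  | succ K ih =>
    intro c hc i
    have hsplit : ∑ j ∈ Finset.range (K + 1), c j * a ^ j
        = c 0 + a * ∑ j ∈ Finset.range K, c (j + 1) * a ^ j := by
      rw [Finset.sum_range_succ']
      have : ∀ j ∈ Finset.range K, c (j + 1) * a ^ (j + 1) = a * (c (j + 1) * a ^ j) :=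
        fun j _ => by ring
      rw [Finset.sum_congr rfl this, ← Finset.mul_sum]
      ring
    rw [hsplit]
    by_cases hN : c 0 + a * ∑ j ∈ Finset.range K, c (j + 1) * a ^ j = 0
    · have hc0 : c 0 = 0 := by omega
      have hT : ∑ j ∈ Finset.range K, c (j + 1) * a ^ j = 0 := by
        rcases Nat.mul_eq_zero.mp (by omega : a * ∑ j ∈ Finset.range K, c (j + 1) * a ^ j = 0)
          with h | h
        · omega
        · exact h
      rw [hN, Nat.digits_zero, List.getD_eq_default _ _ (by simp)]
      symm
      rw [ite_eq_right_iff]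
      intro hi
      match i with
      | 0 => exact hc0
      | i + 1 =>
        have hih := ih (fun j => c (j + 1)) (fun j => hc (j + 1)) i
        rw [hT, Nat.digits_zero, List.getD_eq_default _ _ (by simp),
          if_pos (by omega : i < K)] at hih
        exact hih.symm
    · rw [Nat.digits_def' (by omega : 1 < a) (Nat.pos_of_ne_zero hN)]
      have hmod : (c 0 + a * ∑ j ∈ Finset.range K, c (j + 1) * a ^ j) % a = c 0 := by
        rw [Nat.add_mul_mod_self_left]
        exact Nat.mod_eq_of_lt (hc 0)
      have hdivv : (c 0 + a * ∑ j ∈ Finset.range K, c (j + 1) * a ^ j) / a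
          = ∑ j ∈ Finset.range K, c (j + 1) * a ^ j := by
        rw [Nat.add_mul_div_left _ _ (by omega : 0 < a), Nat.div_eq_of_lt (hc 0), zero_add]
      rw [hmod, hdivv]
      match i with
      | 0 => simp
      | i + 1 =>
        simp only [List.getD_cons_succ]
        rw [ih (fun j => c (j + 1)) (fun j => hc (j + 1)) i]
        simp [Nat.succ_lt_succ_iff]

/-! ### The expand map -/

/-- `N` copies of `u` become `d_j` copies of `a^j * u` where `N = Σ d_j a^j` in base `a`. -/
def expandOne (a u N : ℕ) : Multiset ℕ :=
  ∑ j ∈ Finset.range (N + 1), replicate ((a.digits N).getD j 0) (a ^ j * u)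

def expand (a : ℕ) (M : Multiset ℕ) : Multiset ℕ :=
  ∑ u ∈ M.toFinset, expandOne a u (M.count u)

lemma multiset_sum_sum {ι : Type*} (s : Finset ι) (f : ι → Multiset ℕ) :
    (∑ x ∈ s, f x).sum = ∑ x ∈ s, (f x).sum := by
  rw [← Multiset.coe_sumAddMonoidHom, map_sum]

lemma expandOne_sum {a u N : ℕ} (ha : 2 ≤ a) : (expandOne a u N).sum = N * u := by
  unfold expandOne
  rw [multiset_sum_sum]
  have : ∀ j ∈ Finset.range (N + 1),
      (replicate ((a.digits N).getD j 0) (a ^ j * u)).sum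
        = ((a.digits N).getD j 0 * a ^ j) * u := by
    intro j _
    rw [Multiset.sum_replicate, smul_eq_mul]; ring
  rw [Finset.sum_congr rfl this, ← Finset.sum_mul,
    sum_getD_mul (a.digits N) (N + 1) (digits_len_le ha), Nat.ofDigits_digits]

lemma count_expandOne {a u m N : ℕ} (ha : 2 ≤ a) (hu : ¬ a ∣ u) (hm : 0 < m) :
    (expandOne a u N).count m
      = if upart a m = u then (a.digits N).getD (vpart a m) 0 else 0 := by
  unfold expandOne
  rw [Multiset.count_sum']
  simp only [Multiset.count_replicate]
  by_cases h : upart a m = u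
  · rw [if_pos h]
    have key : ∀ j ∈ Finset.range (N + 1),
        (if a ^ j * u = m then (a.digits N).getD j 0 else 0)
          = if j = vpart a m then (a.digits N).getD j 0 else 0 := by
      intro j _
      by_cases hj : j = vpart a m
      · subst hj
        rw [if_pos rfl, if_pos (by rw [← h, decomp])]
      · have hne : a ^ j * u ≠ m := fun hEq => hj (by rw [← hEq, vpart_pow_mul ha hu])
        rw [if_neg hj, if_neg hne]
    rw [Finset.sum_congr rfl key,
      Finset.sum_ite_eq' (Finset.range (N + 1)) (vpart a m) fun j => (a.digits N).getD j 0]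
    by_cases hv : vpart a m ∈ Finset.range (N + 1)
    · rw [if_pos hv]
    · rw [if_neg hv]
      symm
      apply List.getD_eq_default
      have := digits_len_le (a := a) (N := N) ha
      rw [Finset.mem_range] at hv
      omega
  · rw [if_neg h]
    apply Finset.sum_eq_zero
    intro j _
    rw [if_neg]
    intro hEq
    exact h (by rw [← hEq, upart_pow_mul ha hu])

lemma mem_expand {a p : ℕ} {M : Multiset ℕ} (hp : p ∈ expand a M) :
    ∃ u ∈ M, ∃ j, p = a ^ j * u := by
  unfold expand at hp
  rw [Multiset.mem_sum] at hp
  obtain ⟨u, hu, hp⟩ := hp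
  unfold expandOne at hp
  rw [Multiset.mem_sum] at hp
  obtain ⟨j, _, hp⟩ := hp
  rw [Multiset.mem_replicate] at hp
  exact ⟨u, Multiset.mem_toFinset.mp hu, j, hp.2⟩

lemma count_expand {a m : ℕ} {M : Multiset ℕ} (ha : 2 ≤ a)
    (hM : ∀ x ∈ M, 0 < x ∧ ¬ a ∣ x) (hm : 0 < m) :
    (expand a M).count m = (a.digits (M.count (upart a m))).getD (vpart a m) 0 := by
  unfold expand
  rw [Multiset.count_sum']
  rw [Finset.sum_congr rfl
    (fun u hu => count_expandOne ha (hM u (Multiset.mem_toFinset.mp hu)).2 hm)]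
  rw [Finset.sum_ite_eq M.toFinset (upart a m)
    (fun u => (a.digits (M.count u)).getD (vpart a m) 0)]
  by_cases hv : upart a m ∈ M.toFinset
  · rw [if_pos hv]
  · rw [if_neg hv, Multiset.count_eq_zero_of_notMem (fun hc => hv (Multiset.mem_toFinset.mpr hc))]
    simp [List.getD]

lemma expand_sum {a : ℕ} (ha : 2 ≤ a) (M : Multiset ℕ) : (expand a M).sum = M.sum := by
  unfold expand
  rw [multiset_sum_sum]
  conv_rhs => rw [← Multiset.toFinset_sum_count_nsmul_eq M, multiset_sum_sum]
  refine Finset.sum_congr rfl fun u _ => ?_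
  rw [expandOne_sum ha, Multiset.nsmul_singleton, Multiset.sum_replicate, smul_eq_mul]

/-! ### The two compositions -/

lemma expand_collapse {a : ℕ} (ha : 2 ≤ a) (M : Multiset ℕ)
    (hpos : ∀ m ∈ M, 0 < m) (hcnt : ∀ i, M.count i < a) :
    expand a (collapse a M) = M := by
  have hcoll : ∀ x ∈ collapse a M, 0 < x ∧ ¬ a ∣ x := by
    intro x hx
    obtain ⟨m, hm, rfl⟩ := (mem_collapse ha).mp hx
    exact ⟨upart_pos (hpos m hm), not_dvd_upart ha (hpos m hm)⟩
  ext m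
  rcases Nat.eq_zero_or_pos m with rfl | hm
  · rw [Multiset.count_eq_zero_of_notMem, Multiset.count_eq_zero_of_notMem]
    · intro h; exact Nat.lt_irrefl 0 (hpos 0 h)
    · intro h
      obtain ⟨u, hu, j, hj⟩ := mem_expand h
      have := (hcoll u hu).1
      have : (0:ℕ) < a ^ j * u := by positivity
      omega
  · set K := M.sum + 1 with hKdef
    have hbig : ∀ x ∈ M, x < a ^ K := by
      intro x hx
      have h1 : x ≤ M.sum := Multiset.single_le_sum (fun y _ => Nat.zero_le y) x hx
      have h2 : K ≤ 2 ^ K := Nat.le_of_lt (Nat.lt_two_pow_self (n := K))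
      have h3 : (2:ℕ) ^ K ≤ a ^ K := Nat.pow_le_pow_left (by omega) K
      omega
    rw [count_expand ha hcoll hm]
    rw [count_collapse ha (not_dvd_upart ha hm) M hpos hbig]
    rw [getD_digits_sum ha K (fun j => M.count (a ^ j * upart a m)) (fun j => hcnt _)]
    by_cases hv : vpart a m < K
    · rw [if_pos hv, decomp]
    · rw [if_neg hv]
      symm
      rw [Multiset.count_eq_zero_of_notMem]
      intro hmem
      have h1 : m < a ^ K := hbig m hmem
      have h2 : a ^ K ≤ a ^ vpart a m := Nat.pow_le_pow_right (by omega) (by omega)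
      have h3 : a ^ vpart a m ≤ m := pow_vpart_le hm
      omega

lemma collapse_expand {a : ℕ} (ha : 2 ≤ a) (M : Multiset ℕ)
    (hM : ∀ x ∈ M, 0 < x ∧ ¬ a ∣ x) :
    collapse a (expand a M) = M := by
  have hexp : ∀ x ∈ expand a M, 0 < x := by
    intro x hx
    obtain ⟨u, hu, j, rfl⟩ := mem_expand hx
    have := (hM u hu).1
    positivity
  ext w
  by_cases hw : ¬ a ∣ w
  · have hwpos : 0 < w := by
      rcases Nat.eq_zero_or_pos w with h | h
      · subst h; simp at hw
      · exact h
    set K := (expand a M).sum + M.count w + 1 with hKdef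
    have hbig : ∀ x ∈ expand a M, x < a ^ K := by
      intro x hx
      have h1 : x ≤ (expand a M).sum := Multiset.single_le_sum (fun y _ => Nat.zero_le y) x hx
      have h2 : K ≤ 2 ^ K := Nat.le_of_lt (Nat.lt_two_pow_self (n := K))
      have h3 : (2:ℕ) ^ K ≤ a ^ K := Nat.pow_le_pow_left (by omega) K
      omega
    rw [count_collapse ha hw (expand a M) hexp hbig]
    have hterm : ∀ j ∈ Finset.range K,
        (expand a M).count (a ^ j * w) * a ^ j
          = (a.digits (M.count w)).getD j 0 * a ^ j := by
      intro j _
      rw [count_expand ha hM (by positivity), upart_pow_mul ha hw, vpart_pow_mul ha hw]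
    rw [Finset.sum_congr rfl hterm,
      sum_getD_mul (a.digits (M.count w)) K ?hlen, Nat.ofDigits_digits]
    case hlen =>
      have h1 := digits_len_le (a := a) (N := M.count w) ha
      omega
  · push_neg at hw
    rw [Multiset.count_eq_zero_of_notMem, Multiset.count_eq_zero_of_notMem]
    · intro h
      exact (hM w h).2 hw
    · intro h
      obtain ⟨m, hm, rfl⟩ := (mem_collapse ha).mp h
      exact not_dvd_upart ha (hexp m hm) hw

end GlaisherAux

namespace GlaisherAux

lemma count_expand_lt {a : ℕ} {M : Multiset ℕ} (ha : 2 ≤ a)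
    (hM : ∀ x ∈ M, 0 < x ∧ ¬ a ∣ x) (i : ℕ) : (expand a M).count i < a := by
  rcases Nat.eq_zero_or_pos i with rfl | hi
  · rw [Multiset.count_eq_zero_of_notMem]
    · omega
    · intro h
      obtain ⟨u, hu, j, hj⟩ := mem_expand h
      have h1 := (hM u hu).1
      have h2 : (0:ℕ) < a ^ j * u := by positivity
      omega
  · rw [count_expand ha hM hi]
    rcases lt_or_ge (vpart a i) ((a.digits (M.count (upart a i))).length) with h | h
    · rw [List.getD_eq_getElem _ _ h]
      exact Nat.digits_lt_base (by omega) (List.getElem_mem h)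
    · rw [List.getD_eq_default _ _ h]
      omega

/-- the collapse map on partitions -/
def collapsePart {n : ℕ} (a : ℕ) (ha : 2 ≤ a) (l : n.Partition) : n.Partition where
  parts := collapse a l.parts
  parts_pos := fun {i} hi => by
    obtain ⟨m, hm, rfl⟩ := (mem_collapse ha).mp hi
    exact upart_pos (l.parts_pos hm)
  parts_sum := by rw [collapse_sum, l.parts_sum]

/-- the expand map on partitions -/
def expandPart {n : ℕ} (a : ℕ) (ha : 2 ≤ a) (l : n.Partition) : n.Partition where
  parts := expand a l.parts
  parts_pos := fun {i} hi => by
    obtain ⟨u, hu, j, rfl⟩ := mem_expand hi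
    have := l.parts_pos hu
    positivity
  parts_sum := by rw [expand_sum ha, l.parts_sum]

lemma key {a b : ℕ} (ha : 2 ≤ a) (hb : 2 ≤ b) (hab : Nat.Coprime b a) (n : ℕ) :
    (Finset.univ.filter (fun l : n.Partition =>
        (∀ p ∈ l.parts, ¬ b ∣ p) ∧ ∀ i, l.parts.count i < a)).card =
    (Finset.univ.filter (fun l : n.Partition =>
        ∀ p ∈ l.parts, ¬ a ∣ p ∧ ¬ b ∣ p)).card := by
  refine Finset.card_bij' (fun l _ => collapsePart a ha l) (fun l _ => expandPart a ha l)
    ?_ ?_ ?_ ?_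
  · intro l hl
    simp only [Finset.mem_filter, Finset.mem_univ, true_and] at hl ⊢
    intro p hp
    obtain ⟨m, hm, rfl⟩ := (mem_collapse ha).mp hp
    have hmpos := l.parts_pos hm
    refine ⟨not_dvd_upart ha hmpos, fun hbd => hl.1 m hm ?_⟩
    exact (decomp a m) ▸ hbd.mul_left (a ^ vpart a m)
  · intro l hl
    simp only [Finset.mem_filter, Finset.mem_univ, true_and] at hl ⊢
    have hM : ∀ x ∈ l.parts, 0 < x ∧ ¬ a ∣ x :=
      fun x hx => ⟨l.parts_pos hx, (hl x hx).1⟩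
    constructor
    · intro p hp
      obtain ⟨u, hu, j, rfl⟩ := mem_expand hp
      intro hbd
      exact (hl u hu).2 ((hab.pow_right j).dvd_of_dvd_mul_left hbd)
    · exact count_expand_lt ha hM
  · intro l hl
    simp only [Finset.mem_filter, Finset.mem_univ, true_and] at hl
    apply Nat.Partition.ext
    exact expand_collapse ha l.parts (fun m hm => l.parts_pos hm) hl.2
  · intro l hl
    simp only [Finset.mem_filter, Finset.mem_univ, true_and] at hl
    apply Nat.Partition.ext
    exact collapse_expand ha l.parts (fun x hx => ⟨l.parts_pos hx, (hl x hx).1⟩)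

end GlaisherAux

/-- For coprime `r, s ≥ 2`, the number of partitions of `n` with no part divisible by `s` and
each part of multiplicity `< r` equals the number with no part divisible by `r` and each part
of multiplicity `< s`. -/
theorem card_rs_regular_symm (r s : ℕ) (hr : 2 ≤ r) (hs : 2 ≤ s)
    (hcop : Nat.Coprime r s) (n : ℕ) :
    (Finset.univ.filter (fun l : n.Partition =>
        (∀ p ∈ l.parts, ¬ s ∣ p) ∧ ∀ i, l.parts.count i < r)).card =
    (Finset.univ.filter (fun l : n.Partition =>
        (∀ p ∈ l.parts, ¬ r ∣ p) ∧ ∀ i, l.parts.count i < s)).card := by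
  rw [GlaisherAux.key hr hs hcop.symm n, GlaisherAux.key hs hr hcop n]
  congr 1
  apply Finset.filter_congr
  intro l _
  exact forall₂_congr fun p _ => and_comm
end

section
/- The number of 2-regular, 3-class regular partitions of n (no repeated parts, no part divisible by 3) equals the number of 3-regular, 2-class regular partitions of n (all parts odd, each part occurring at most twice). -/
open Nat Finset
open scoped Classical

namespace GlaisherAux

variable {p : ℕ}

/-! ### Base-`p` digit lemmas -/

/-- `a`-th digit of `c` in base `p`. -/
def dig (p c a : ℕ) : ℕ := (Nat.digits p c).getD a 0

lemma dig_zero_left (a : ℕ) : dig p 0 a = 0 := by simp [dig]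

lemma dig_zero (hp : 1 < p) (c : ℕ) : dig p c 0 = c % p := by
  rcases Nat.eq_zero_or_pos c with rfl | hc
  · simp [dig]
  · rw [dig, Nat.digits_def' hp hc]; rfl

lemma dig_succ (hp : 1 < p) (c a : ℕ) : dig p c (a + 1) = dig p (c / p) a := by
  rcases Nat.eq_zero_or_pos c with rfl | hc
  · simp [dig]
  · rw [dig, Nat.digits_def' hp hc]; rfl

lemma dig_lt (hp : 1 < p) (c a : ℕ) : dig p c a < p := by
  induction a generalizing c with
  | zero => rw [dig_zero hp]; exact Nat.mod_lt _ (by omega)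
  | succ a ih => rw [dig_succ hp]; exact ih _

lemma pow_le_of_dig_ne_zero (hp : 1 < p) {c a : ℕ} (h : dig p c a ≠ 0) : p ^ a ≤ c := by
  induction a generalizing c with
  | zero => rw [dig_zero hp] at h; rw [pow_zero]; exact Nat.pos_of_ne_zero (fun h0 => h (by simp [h0]))
  | succ a ih =>
    rw [dig_succ hp] at h
    have h1 := ih h
    calc p ^ (a + 1) = p * p ^ a := by ring
    _ ≤ p * (c / p) := Nat.mul_le_mul_left _ h1
    _ ≤ c := Nat.mul_div_le c p

lemma sum_dig (hp : 1 < p) {D c : ℕ} (h : c < p ^ D) :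
    ∑ a ∈ range D, p ^ a * dig p c a = c := by
  induction D generalizing c with
  | zero => simp at h ⊢; omega
  | succ D ih =>
    have hdiv : c / p < p ^ D := by
      rw [pow_succ'] at h
      exact Nat.div_lt_of_lt_mul h
    rw [Finset.sum_range_succ']
    simp only [dig_succ hp, dig_zero hp, pow_zero, one_mul]
    rw [Finset.sum_congr rfl (fun a _ => by ring :
        ∀ a ∈ range D, p ^ (a + 1) * dig p (c / p) a = p * (p ^ a * dig p (c / p) a)),
      ← Finset.mul_sum, ih hdiv, Nat.add_comm]
    exact Nat.mod_add_div c p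

lemma dig_sum (hp : 1 < p) {D : ℕ} {c : ℕ → ℕ} (hc : ∀ a, c a < p) {b : ℕ} (hb : b < D) :
    dig p (∑ a ∈ range D, p ^ a * c a) b = c b := by
  induction D generalizing c b with
  | zero => omega
  | succ D ih =>
    have hsplit : ∑ a ∈ range (D + 1), p ^ a * c a
        = c 0 + p * ∑ a ∈ range D, p ^ a * c (a + 1) := by
      rw [Finset.sum_range_succ',
        Finset.sum_congr rfl (fun a _ => by ring :
          ∀ a ∈ range D, p ^ (a + 1) * c (a + 1) = p * (p ^ a * c (a + 1))),
        ← Finset.mul_sum]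
      simp only [pow_zero, one_mul]
      exact Nat.add_comm _ _
    rw [hsplit]
    cases b with
    | zero =>
      rw [dig_zero hp, Nat.add_mul_mod_self_left, Nat.mod_eq_of_lt (hc 0)]
    | succ b =>
      rw [dig_succ hp]
      have : (c 0 + p * ∑ a ∈ range D, p ^ a * c (a + 1)) / p
          = ∑ a ∈ range D, p ^ a * c (a + 1) := by
        rw [Nat.add_mul_div_left _ _ (by omega), Nat.div_eq_of_lt (hc 0)]; omega
      rw [this]
      exact ih (fun a => hc (a + 1)) (by omega)

/-! ### Decomposition `x = p ^ a * m` with `¬ p ∣ m` -/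

lemma decomp_s12 (hp : p.Prime) {m : ℕ} (a : ℕ) (hm : ¬ p ∣ m) :
    (p ^ a * m).factorization p = a ∧ ordCompl[p] (p ^ a * m) = m := by
  have hm0 : m ≠ 0 := fun h0 => hm (h0 ▸ dvd_zero p)
  have h1 : (p ^ a * m).factorization p = a := by
    rw [Nat.factorization_mul (pow_ne_zero a hp.pos.ne') hm0]
    simp [hp.factorization_pow, Nat.factorization_eq_zero_of_not_dvd hm]
  refine ⟨h1, ?_⟩
  rw [h1, Nat.mul_div_cancel_left _ (pow_pos hp.pos a)]

lemma pow_mul_inj (hp : p.Prime) {m m' a a' : ℕ} (hm : ¬ p ∣ m) (hm' : ¬ p ∣ m')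
    (h : p ^ a * m = p ^ a' * m') : a = a' ∧ m = m' := by
  have h1 := decomp_s12 hp a hm
  have h2 := decomp_s12 hp a' hm'
  have ha : a = a' := by rw [← h1.1, h, h2.1]
  subst ha
  exact ⟨rfl, Nat.eq_of_mul_eq_mul_left (pow_pos hp.pos a) h⟩

/-! ### Sum/membership helpers for finset-indexed sums of multisets -/

lemma msum_sum {α : Type*} (s : Finset α) (f : α → Multiset ℕ) :
    (∑ x ∈ s, f x).sum = ∑ x ∈ s, (f x).sum := by
  classical
  induction s using Finset.induction with
  | empty => simp
  | insert _ _ h ih => simp [Finset.sum_insert h, ih]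

lemma mem_msum {α : Type*} {s : Finset α} {f : α → Multiset ℕ} {y : ℕ}
    (h : y ∈ ∑ x ∈ s, f x) : ∃ x ∈ s, y ∈ f x := by
  classical
  induction s using Finset.induction with
  | empty => simp at h
  | insert _ _ hn ih =>
    rw [Finset.sum_insert hn, Multiset.mem_add] at h
    rcases h with h | h
    · exact ⟨_, Finset.mem_insert_self _ _, h⟩
    · obtain ⟨x, hx, hy⟩ := ih h
      exact ⟨x, Finset.mem_insert_of_mem hx, hy⟩

lemma count_le_sum {S : Multiset ℕ} (hS : ∀ x ∈ S, 0 < x) (y : ℕ) : S.count y ≤ S.sum := by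
  induction S using Multiset.induction with
  | empty => simp
  | cons x S ih =>
    have hx : 0 < x := hS x (Multiset.mem_cons_self x S)
    have h1 := ih (fun z hz => hS z (Multiset.mem_cons_of_mem hz))
    rw [Multiset.count_cons, Multiset.sum_cons]
    split <;> omega

lemma mem_le_sum {S : Multiset ℕ} (hS : ∀ x ∈ S, 0 < x) {y : ℕ} (hy : y ∈ S) : y ≤ S.sum :=
  Multiset.single_le_sum (fun x hx => (hS x hx).le) y hy

/-! ### The Glaisher map `phi` -/

/-- The Glaisher map on parts: replace `x = p^a * m` (with `¬ p ∣ m`) by `p^a` copies of `m`. -/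
def phi (p : ℕ) (S : Multiset ℕ) : Multiset ℕ :=
  S.bind fun x => Multiset.replicate (p ^ x.factorization p) (ordCompl[p] x)

lemma phi_sum (S : Multiset ℕ) : (phi p S).sum = S.sum := by
  rw [phi, Multiset.sum_bind]
  congr 1
  rw [show (fun a => (Multiset.replicate (p ^ a.factorization p) (ordCompl[p] a)).sum) = id by
    funext x
    simp [Multiset.sum_replicate, Nat.ordProj_mul_ordCompl_eq_self]]
  exact Multiset.map_id S

lemma mem_phi (hp : p ≠ 0) {S : Multiset ℕ} {y : ℕ} :
    y ∈ phi p S ↔ ∃ x ∈ S, y = ordCompl[p] x := by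
  simp only [phi, Multiset.mem_bind, Multiset.mem_replicate]
  constructor
  · rintro ⟨x, hx, -, rfl⟩; exact ⟨x, hx, rfl⟩
  · rintro ⟨x, hx, rfl⟩
    exact ⟨x, hx, pow_ne_zero _ hp, rfl⟩

lemma count_phi_aux (hp : p.Prime) {m x D : ℕ} (hm : ¬ p ∣ m) (hx : 0 < x) (hxD : x < D) :
    (if ordCompl[p] x = m then p ^ x.factorization p else 0)
      = ∑ a ∈ range D, p ^ a * (if p ^ a * m = x then 1 else 0) := by
  by_cases h : ordCompl[p] x = m
  · rw [if_pos h]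
    have hxe : p ^ x.factorization p * m = x := by
      rw [← h]; exact Nat.ordProj_mul_ordCompl_eq_self x p
    have hv : x.factorization p < D := by
      calc x.factorization p < p ^ x.factorization p := Nat.lt_pow_self hp.one_lt
      _ ≤ x := Nat.le_of_dvd hx (Nat.ordProj_dvd x p)
      _ < D := hxD
    rw [Finset.sum_eq_single_of_mem (x.factorization p) (mem_range.2 hv)]
    · rw [if_pos hxe, mul_one]
    · intro a _ ha
      rw [if_neg, mul_zero]
      intro he
      exact ha (by rw [← (decomp_s12 hp a hm).1, he])
  · rw [if_neg h]
    symm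
    apply Finset.sum_eq_zero
    intro a _
    rw [if_neg, mul_zero]
    intro he
    exact h (by rw [← he, (decomp_s12 hp a hm).2])

lemma count_phi (hp : p.Prime) {m : ℕ} (hm : ¬ p ∣ m) {S : Multiset ℕ}
    (hS : ∀ x ∈ S, 0 < x) {D : ℕ} (hD : S.sum < D) :
    (phi p S).count m = ∑ a ∈ range D, p ^ a * S.count (p ^ a * m) := by
  induction S using Multiset.induction with
  | empty => simp [phi]
  | cons x S ih =>
    have hx : 0 < x := hS x (Multiset.mem_cons_self x S)
    have hsum : x + S.sum = (x ::ₘ S).sum := (Multiset.sum_cons x S).symm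
    have hD' : S.sum < D := by omega
    have hxD : x < D := by omega
    rw [phi, Multiset.cons_bind, Multiset.count_add, ← phi,
      ih (fun y hy => hS y (Multiset.mem_cons_of_mem hy)) hD']
    simp only [Multiset.count_replicate, Multiset.count_cons, Nat.mul_add, Finset.sum_add_distrib]
    rw [count_phi_aux hp hm hx hxD]
    omega

/-! ### The inverse map `psi` -/

/-- `dig p c a` copies of `p ^ a * m` for each `a`. -/
noncomputable def digitMS (p c m : ℕ) : Multiset ℕ :=
  ∑ a ∈ range c, Multiset.replicate (dig p c a) (p ^ a * m)

lemma digitMS_sum (hp : 1 < p) (c m : ℕ) : (digitMS p c m).sum = c * m := by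
  rw [digitMS, msum_sum]
  calc ∑ a ∈ range c, (Multiset.replicate (dig p c a) (p ^ a * m)).sum
      = ∑ a ∈ range c, (p ^ a * dig p c a) * m := by
        apply Finset.sum_congr rfl
        intro a _
        rw [Multiset.sum_replicate, smul_eq_mul]
        ring
    _ = (∑ a ∈ range c, p ^ a * dig p c a) * m := by rw [Finset.sum_mul]
    _ = c * m := by rw [sum_dig hp (Nat.lt_pow_self hp : c < p ^ c)]

lemma mem_digitMS {c m y : ℕ} (h : y ∈ digitMS p c m) :
    ∃ a, y = p ^ a * m := by
  rw [digitMS] at h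
  obtain ⟨a, -, ha⟩ := mem_msum h
  exact ⟨a, (Multiset.eq_of_mem_replicate ha)⟩

lemma count_digitMS (hp : p.Prime) {m m' : ℕ} (hm : ¬ p ∣ m) (hm' : ¬ p ∣ m') (c b : ℕ) :
    (digitMS p c m).count (p ^ b * m') = if m = m' then dig p c b else 0 := by
  rw [digitMS, Multiset.count_sum']
  by_cases h : m = m'
  · subst h
    by_cases hb : b < c
    · rw [Finset.sum_eq_single_of_mem b (mem_range.2 hb)]
      · rw [Multiset.count_replicate, if_pos rfl, if_pos rfl]
      · intro a _ hab
        rw [Multiset.count_replicate, if_neg]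
        intro he
        exact hab (pow_mul_inj hp hm hm he).1
    · have hdig : dig p c b = 0 := by
        by_contra hne
        have h1 := pow_le_of_dig_ne_zero hp.one_lt hne
        have h2 : b < p ^ b := Nat.lt_pow_self hp.one_lt
        omega
      rw [if_pos rfl, hdig]
      apply Finset.sum_eq_zero
      intro a ha
      rw [Multiset.count_replicate, if_neg]
      intro he
      have := (pow_mul_inj hp hm hm he).1
      rw [mem_range] at ha
      omega
  · rw [if_neg h]
    apply Finset.sum_eq_zero
    intro a _
    rw [Multiset.count_replicate, if_neg]
    intro he
    exact h (pow_mul_inj hp hm hm' he).2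

/-- The inverse Glaisher map. -/
noncomputable def psi (p : ℕ) (T : Multiset ℕ) : Multiset ℕ :=
  ∑ m ∈ T.toFinset, digitMS p (T.count m) m

lemma psi_sum (hp : 1 < p) (T : Multiset ℕ) : (psi p T).sum = T.sum := by
  rw [psi, msum_sum]
  calc ∑ m ∈ T.toFinset, (digitMS p (T.count m) m).sum
      = ∑ m ∈ T.toFinset, T.count m * m := by
        exact Finset.sum_congr rfl fun m _ => digitMS_sum hp _ _
    _ = T.sum := by
        conv_rhs => rw [← Multiset.toFinset_sum_count_nsmul_eq T]
        rw [msum_sum]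
        refine Finset.sum_congr rfl fun m _ => ?_
        rw [Multiset.sum_nsmul, Multiset.sum_singleton, smul_eq_mul]

lemma mem_psi {T : Multiset ℕ} {y : ℕ} (h : y ∈ psi p T) :
    ∃ m ∈ T, ∃ a, y = p ^ a * m := by
  rw [psi] at h
  obtain ⟨m, hm, hy⟩ := mem_msum h
  obtain ⟨a, ha⟩ := mem_digitMS hy
  exact ⟨m, Multiset.mem_toFinset.1 hm, a, ha⟩

lemma count_psi (hp : p.Prime) {T : Multiset ℕ} (hT : ∀ x ∈ T, ¬ p ∣ x)
    {m : ℕ} (hm : ¬ p ∣ m) (b : ℕ) :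
    (psi p T).count (p ^ b * m) = dig p (T.count m) b := by
  rw [psi, Multiset.count_sum']
  by_cases h : m ∈ T.toFinset
  · rw [Finset.sum_eq_single_of_mem m h]
    · rw [count_digitMS hp hm hm, if_pos rfl]
    · intro m' hm' hne
      rw [count_digitMS hp (hT m' (Multiset.mem_toFinset.1 hm')) hm, if_neg hne]
  · have hc : T.count m = 0 := by
      exact Multiset.count_eq_zero.2 fun hmem => h (Multiset.mem_toFinset.2 hmem)
    rw [hc, dig_zero_left]
    apply Finset.sum_eq_zero
    intro m' hm'
    rw [count_digitMS hp (hT m' (Multiset.mem_toFinset.1 hm')) hm, if_neg]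
    intro he
    exact h (Multiset.mem_toFinset.2 (he ▸ Multiset.mem_toFinset.1 hm'))

lemma P_pow {P : ℕ → Prop} (hP : ∀ x, P (p * x) ↔ P x) (a x : ℕ) : P (p ^ a * x) ↔ P x := by
  induction a with
  | zero => rw [pow_zero, one_mul]
  | succ a ih => rw [pow_succ, mul_comm (p ^ a) p, mul_assoc, hP]; exact ih

/-- The Glaisher map as a map on partitions. -/
def PhiP (hp : p.Prime) (n : ℕ) (l : n.Partition) : n.Partition where
  parts := phi p l.parts
  parts_pos := by
    intro y hy
    obtain ⟨x, hx, rfl⟩ := (mem_phi hp.pos.ne').1 hy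
    exact Nat.ordCompl_pos p (l.parts_pos hx).ne'
  parts_sum := by rw [phi_sum, l.parts_sum]

theorem glaisher (hp : p.Prime) (P : ℕ → Prop) (hP : ∀ x, P (p * x) ↔ P x) (n : ℕ)
    [inst1 : DecidablePred fun l : n.Partition =>
      (∀ x ∈ l.parts, P x) ∧ ∀ i, l.parts.count i < p]
    [inst2 : DecidablePred fun l : n.Partition => ∀ x ∈ l.parts, P x ∧ ¬ p ∣ x] :
    (Finset.univ.filter fun l : n.Partition =>
        (∀ x ∈ l.parts, P x) ∧ ∀ i, l.parts.count i < p).card =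
    (Finset.univ.filter fun l : n.Partition => ∀ x ∈ l.parts, P x ∧ ¬ p ∣ x).card := by
  refine Finset.card_bij (fun l _ => PhiP hp n l) ?_ ?_ ?_
  · -- maps into B
    intro l hl
    rw [Finset.mem_filter] at hl ⊢
    obtain ⟨-, hPl, -⟩ := hl
    refine ⟨Finset.mem_univ _, ?_⟩
    intro y hy
    obtain ⟨x, hx, rfl⟩ := (mem_phi hp.pos.ne').1 hy
    have hx0 : x ≠ 0 := (l.parts_pos hx).ne'
    refine ⟨?_, Nat.not_dvd_ordCompl hp hx0⟩
    have hxe : p ^ x.factorization p * ordCompl[p] x = x :=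
      Nat.ordProj_mul_ordCompl_eq_self x p
    exact (P_pow hP _ _).1 (by rw [hxe]; exact hPl x hx)
  · -- injective
    intro l1 hl1 l2 hl2 heq
    rw [Finset.mem_filter] at hl1 hl2
    have hparts : phi p l1.parts = phi p l2.parts := congrArg Nat.Partition.parts heq
    apply Nat.Partition.ext
    ext y
    by_cases hy0 : y = 0
    · subst hy0
      rw [Multiset.count_eq_zero.2 (fun h => (l1.parts_pos h).ne rfl),
        Multiset.count_eq_zero.2 (fun h => (l2.parts_pos h).ne rfl)]
    by_cases hyn : y ≤ n
    · set b := y.factorization p with hb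
      set m := ordCompl[p] y with hmdef
      have hm : ¬ p ∣ m := Nat.not_dvd_ordCompl hp hy0
      have hy : p ^ b * m = y := Nat.ordProj_mul_ordCompl_eq_self y p
      have hbD : b < n + 1 := by
        have h1 : b < p ^ b := Nat.lt_pow_self hp.one_lt
        have h2 : p ^ b ≤ y := Nat.le_of_dvd (Nat.pos_of_ne_zero hy0) (Nat.ordProj_dvd y p)
        omega
      have key : ∀ l : n.Partition, (∀ i, l.parts.count i < p) →
          l.parts.count y = dig p ((phi p l.parts).count m) b := by
        intro l hcnt
        rw [count_phi hp hm (fun x hx => l.parts_pos hx)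
          (show l.parts.sum < n + 1 by rw [l.parts_sum]; omega),
          dig_sum hp.one_lt (fun a => hcnt _) hbD, hy]
      rw [key l1 hl1.2.2, key l2 hl2.2.2, hparts]
    · rw [Multiset.count_eq_zero.2, Multiset.count_eq_zero.2]
      · intro h
        exact hyn ((l2.parts_sum (n := n)) ▸ mem_le_sum (fun x hx => l2.parts_pos hx) h)
      · intro h
        exact hyn ((l1.parts_sum (n := n)) ▸ mem_le_sum (fun x hx => l1.parts_pos hx) h)
  · -- surjective
    intro l hl
    rw [Finset.mem_filter] at hl
    have hBl := hl.2
    have hTpos : ∀ x ∈ l.parts, 0 < x := fun x hx => l.parts_pos hx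
    have hTnd : ∀ x ∈ l.parts, ¬ p ∣ x := fun x hx => (hBl x hx).2
    have hpsipos : ∀ y ∈ psi p l.parts, 0 < y := by
      intro y hy
      obtain ⟨m, hm, a, rfl⟩ := mem_psi hy
      exact Nat.mul_pos (pow_pos hp.pos a) (hTpos m hm)
    refine ⟨⟨psi p l.parts, fun {y} hy => hpsipos y hy, by
        rw [psi_sum hp.one_lt, l.parts_sum]⟩, ?_, ?_⟩
    · rw [Finset.mem_filter]
      refine ⟨Finset.mem_univ _, ?_, ?_⟩
      · intro y hy
        obtain ⟨m, hm, a, rfl⟩ := mem_psi hy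
        exact (P_pow hP a m).2 (hBl m hm).1
      · intro i
        by_cases hi0 : i = 0
        · subst hi0
          rw [Multiset.count_eq_zero.2 (fun h => (hpsipos 0 h).ne rfl)]
          exact hp.pos
        · have hm : ¬ p ∣ ordCompl[p] i := Nat.not_dvd_ordCompl hp hi0
          have hi : p ^ i.factorization p * ordCompl[p] i = i :=
            Nat.ordProj_mul_ordCompl_eq_self i p
          rw [← hi, count_psi hp hTnd hm]
          exact dig_lt hp.one_lt _ _
    · -- phi (psi T) = T
      apply Nat.Partition.ext
      show phi p (psi p l.parts) = l.parts
      ext y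
      by_cases hy0 : y = 0
      · subst hy0
        rw [Multiset.count_eq_zero.2 (fun h => (hTpos 0 h).ne rfl),
          Multiset.count_eq_zero.2]
        intro h
        obtain ⟨x, hx, hxe⟩ := (mem_phi hp.pos.ne').1 h
        exact (Nat.ordCompl_pos p (hpsipos x hx).ne').ne' hxe.symm
      by_cases hyd : p ∣ y
      · rw [Multiset.count_eq_zero.2 (fun h => hTnd y h hyd), Multiset.count_eq_zero.2]
        intro h
        obtain ⟨x, hx, rfl⟩ := (mem_phi hp.pos.ne').1 h
        exact Nat.not_dvd_ordCompl hp (hpsipos x hx).ne' hyd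
      · have hD : (psi p l.parts).sum < l.parts.sum + 1 := by rw [psi_sum hp.one_lt]; omega
        rw [count_phi hp hyd hpsipos hD,
          Finset.sum_congr rfl (fun a _ => by rw [count_psi hp hTnd hyd a]),
          sum_dig hp.one_lt]
        have h1 : l.parts.count y ≤ l.parts.sum := count_le_sum hTpos y
        have h2 : l.parts.sum + 1 < p ^ (l.parts.sum + 1) := Nat.lt_pow_self hp.one_lt
        omega

end GlaisherAux


open GlaisherAux in
/-- The number of partitions of `n` with no repeated parts and no part divisible by `3`
equals the number of partitions of `n` with all parts odd, each occurring at most twice. -/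
theorem card_two_regular_three_classRegular_eq (n : ℕ) :
    (Finset.univ.filter (fun l : n.Partition =>
        (∀ p ∈ l.parts, ¬ 3 ∣ p) ∧ ∀ i, l.parts.count i < 2)).card =
    (Finset.univ.filter (fun l : n.Partition =>
        (∀ p ∈ l.parts, ¬ 2 ∣ p) ∧ ∀ i, l.parts.count i < 3)).card := by
  have hP2 : ∀ x : ℕ, ¬ (3 ∣ 2 * x) ↔ ¬ (3 ∣ x) := by
    intro x
    omega
  have hP3 : ∀ x : ℕ, ¬ (2 ∣ 3 * x) ↔ ¬ (2 ∣ x) := by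
    intro x
    omega
  refine (glaisher Nat.prime_two (fun x => ¬ 3 ∣ x) hP2 n).trans
    (Eq.trans ?_ (glaisher Nat.prime_three (fun x => ¬ 2 ∣ x) hP3 n).symm)
  congr 1
  apply Finset.filter_congr
  intro l _
  constructor
  · intro h x hx
    exact (h x hx).symm
  · intro h x hx
    exact (h x hx).symm
end
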